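/- Let c be a pseudo-metric on X ∪ {−}, where X is a finite alphabet. Then for all trees x̄, ȳ over X, the mapping distance D_c(x̄, ȳ) (the quantity computed by the dynamic programming scheme of Zhang and Shasha) equals the tree edit distance d_c(x̄, ȳ). -/

import Mathlib

/-- A rooted ordered tree with labels from `X`. -/
inductive PTree (X : Type) : Type where
  | node : X → List (PTree X) → PTree X

namespace PTree

variable {X : Type}

mutual
  /-- The labels of a tree in pre-order. -/
  def preorder : PTree X → List X
    | .node l cs => l :: preorderF cs
  /-- The labels of a forest in pre-order. -/
  def preorderF : List (PTree X) → List X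
    | [] => []
    | t :: ts => preorder t ++ preorderF ts
end

/-- The size of a tree (number of nodes). -/
def size (t : PTree X) : ℕ := (preorder t).length

/-- `Deletes f g l` holds iff the forest `g` is obtained from the forest `f` by
deleting one node labeled `l`, attaching its children in its place. -/
inductive Deletes : List (PTree X) → List (PTree X) → X → Prop where
  | here (l : X) (cs rest : List (PTree X)) :
      Deletes (.node l cs :: rest) (cs ++ rest) l
  | child {cs cs' : List (PTree X)} {l : X} (z : X) (rest : List (PTree X)) :
      Deletes cs cs' l → Deletes (.node z cs :: rest) (.node z cs' :: rest) l
  | skip {rest rest' : List (PTree X)} {l : X} (t : PTree X) :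
      Deletes rest rest' l → Deletes (t :: rest) (t :: rest') l

/-- `Replaces f g l l'` holds iff the forest `g` is obtained from the forest `f` by
changing the label `l` of one node into `l'`. -/
inductive Replaces : List (PTree X) → List (PTree X) → X → X → Prop where
  | here (l l' : X) (cs rest : List (PTree X)) :
      Replaces (.node l cs :: rest) (.node l' cs :: rest) l l'
  | child {cs cs' : List (PTree X)} {l l' : X} (z : X) (rest : List (PTree X)) :
      Replaces cs cs' l l' → Replaces (.node z cs :: rest) (.node z cs' :: rest) l l'
  | skip {rest rest' : List (PTree X)} {l l' : X} (t : PTree X) :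
      Replaces rest rest' l l' → Replaces (t :: rest) (t :: rest') l l'

/-- `EditStep c f g r` holds iff one tree edit (a deletion, an insertion, or a
replacement) of cost `r` under the cost function `c` transforms the forest `f`
into the forest `g`. The gap symbol `−` is represented by `none`:
deleting label `l` costs `c (some l) none`, inserting label `l` costs
`c none (some l)`, and replacing label `l` by `l'` costs `c (some l) (some l')`.
An insertion is exactly the inverse of a deletion (the inserted node may adopt
a consecutive run of existing siblings as children). -/
inductive EditStep (c : Option X → Option X → ℝ) :
    List (PTree X) → List (PTree X) → ℝ → Prop where
  | del {f g : List (PTree X)} {l : X} :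
      Deletes f g l → EditStep c f g (c (some l) none)
  | ins {f g : List (PTree X)} {l : X} :
      Deletes g f l → EditStep c f g (c none (some l))
  | rep {f g : List (PTree X)} {l l' : X} :
      Replaces f g l l' → EditStep c f g (c (some l) (some l'))

/-- `Script c f g r` holds iff some edit script (finite sequence of edits) of
total cost `r` under the cost function `c` transforms the forest `f` into the
forest `g`. -/
inductive Script (c : Option X → Option X → ℝ) :
    List (PTree X) → List (PTree X) → ℝ → Prop where
  | nil (f : List (PTree X)) : Script c f f 0
  | cons {f g h : List (PTree X)} {r s : ℝ} :
      EditStep c f g r → Script c g h s → Script c f h (r + s)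

/-- The tree edit distance `d_c`: the infimum of the costs of all edit scripts
transforming the tree `x` into the tree `y`. -/
noncomputable def editDist (c : Option X → Option X → ℝ) (x y : PTree X) : ℝ :=
  sInf {r : ℝ | Script c [x] [y] r}

mutual
  /-- In pre-order: for every node of the tree, the size of the subtree rooted
  at that node. -/
  def subtreeSizes : PTree X → List ℕ
    | .node l cs => size (.node l cs) :: subtreeSizesF cs
  /-- In pre-order: for every node of the forest, the size of the subtree rooted
  at that node. -/
  def subtreeSizesF : List (PTree X) → List ℕ
    | [] => []
    | t :: ts => subtreeSizes t ++ subtreeSizesF ts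
end

/-- The label of the `i`-th node of `t` in pre-order (`0`-based). -/
def label (t : PTree X) (i : Fin (size t)) : X := (preorder t).get i

/-- The `i`-th node of `t` (in `0`-based pre-order) is an ancestor of the
`j`-th node, characterized via pre-order indices and subtree sizes. -/
def IsAncestor (t : PTree X) (i j : ℕ) : Prop :=
  i < j ∧ j < i + (subtreeSizes t).getD i 0

/-- A tree mapping between `x` and `y`: a set of pairs of (`0`-based pre-order)
node indices such that every index occurs in at most one pair, the mapping is
order-preserving, and it is ancestor-preserving. -/
def IsTreeMapping (x y : PTree X) (M : Finset (Fin (size x) × Fin (size y))) : Prop :=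
  ∀ p ∈ M, ∀ q ∈ M,
    (p.1 = q.1 ↔ p.2 = q.2) ∧ (p.1 < q.1 ↔ p.2 < q.2) ∧
    (IsAncestor x ↑p.1 ↑q.1 ↔ IsAncestor y ↑p.2 ↑q.2)

/-- The cost of a tree mapping `M` under the cost function `c`: matched pairs
of nodes pay the replacement cost, unmatched nodes of `x` pay the deletion
cost, unmatched nodes of `y` pay the insertion cost. -/
def mappingCost (c : Option X → Option X → ℝ) (x y : PTree X)
    (M : Finset (Fin (size x) × Fin (size y))) : ℝ :=
  (∑ p ∈ M, c (some (label x p.1)) (some (label y p.2)))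
    + (∑ i ∈ Finset.univ.filter (fun i : Fin (size x) => ∀ p ∈ M, p.1 ≠ i),
        c (some (label x i)) none)
    + (∑ j ∈ Finset.univ.filter (fun j : Fin (size y) => ∀ p ∈ M, p.2 ≠ j),
        c none (some (label y j)))

/-- The mapping distance `D_c` (the quantity computed by the dynamic
programming scheme of Zhang and Shasha): the minimal cost of a tree mapping
between `x` and `y`. -/
noncomputable def mapDist (c : Option X → Option X → ℝ) (x y : PTree X) : ℝ :=
  sInf {r : ℝ | ∃ M, IsTreeMapping x y M ∧ mappingCost c x y M = r}

end PTree

-- Auxiliary development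
namespace PTree

variable {X : Type}

@[simp] lemma preorderF_nil : preorderF ([] : List (PTree X)) = [] := rfl
lemma preorderF_cons (t : PTree X) (ts : List (PTree X)) :
    preorderF (t :: ts) = preorder t ++ preorderF ts := by rw [preorderF]
lemma preorder_node (a : X) (cs : List (PTree X)) :
    preorder (.node a cs) = a :: preorderF cs := by rw [preorder]
@[simp] lemma subtreeSizesF_nil : subtreeSizesF ([] : List (PTree X)) = [] := rfl
lemma subtreeSizesF_cons (t : PTree X) (ts : List (PTree X)) :
    subtreeSizesF (t :: ts) = subtreeSizes t ++ subtreeSizesF ts := by rw [subtreeSizesF]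
lemma subtreeSizes_node (a : X) (cs : List (PTree X)) :
    subtreeSizes (.node a cs) = size (.node a cs) :: subtreeSizesF cs := by rw [subtreeSizes]

lemma preorderF_append (u v : List (PTree X)) :
    preorderF (u ++ v) = preorderF u ++ preorderF v := by
  induction u with
  | nil => simp
  | cons t ts ih => simp [preorderF_cons, ih]

lemma subtreeSizesF_append (u v : List (PTree X)) :
    subtreeSizesF (u ++ v) = subtreeSizesF u ++ subtreeSizesF v := by
  induction u with
  | nil => simp
  | cons t ts ih => simp [subtreeSizesF_cons, ih]

def sz (f : List (PTree X)) : ℕ := (preorderF f).length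
def lab (f : List (PTree X)) (i : ℕ) : Option X := (preorderF f)[i]?
def anc (f : List (PTree X)) (i j : ℕ) : Prop :=
  i < j ∧ j < i + (subtreeSizesF f).getD i 0

@[simp] lemma sz_nil : sz ([] : List (PTree X)) = 0 := rfl
lemma sz_append (u v : List (PTree X)) : sz (u ++ v) = sz u + sz v := by
  simp [sz, preorderF_append]
lemma size_node (a : X) (cs : List (PTree X)) : size (.node a cs) = sz cs + 1 := by
  simp [size, preorder_node, sz]
lemma sz_single (t : PTree X) : sz [t] = size t := by
  simp [sz, preorderF_cons, size]
lemma sz_cons (a : X) (cs rest : List (PTree X)) :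
    sz (PTree.node a cs :: rest) = sz (cs ++ rest) + 1 := by
  simp [sz, preorderF_cons, preorder_node, preorderF_append]

lemma preorderF_cons' (a : X) (cs rest : List (PTree X)) :
    preorderF (PTree.node a cs :: rest) = a :: preorderF (cs ++ rest) := by
  simp [preorderF_cons, preorder_node, preorderF_append]

lemma subtreeSizesF_cons' (a : X) (cs rest : List (PTree X)) :
    subtreeSizesF (PTree.node a cs :: rest)
      = (sz cs + 1) :: subtreeSizesF (cs ++ rest) := by
  simp [subtreeSizesF_cons, subtreeSizes_node, size_node, subtreeSizesF_append]

lemma length_subtreeSizesF : ∀ f : List (PTree X), (subtreeSizesF f).length = sz f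
  | [] => rfl
  | (PTree.node a cs) :: rest => by
      rw [subtreeSizesF_cons', sz_cons]
      simp [length_subtreeSizesF (cs ++ rest)]
termination_by f => sz f
decreasing_by rw [sz_cons]; omega

lemma anc_bound : ∀ (f : List (PTree X)) (i : ℕ), i < sz f →
    1 ≤ (subtreeSizesF f).getD i 0 ∧ i + (subtreeSizesF f).getD i 0 ≤ sz f
  | [] => by simp
  | (PTree.node a cs) :: rest => by
      intro i hi
      rw [subtreeSizesF_cons', sz_cons] at *
      rcases Nat.eq_zero_or_pos i with h0 | h1
      · subst h0; have := sz_append cs rest; simp; omega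
      · have hlt : i - 1 < sz (cs ++ rest) := by omega
        have := anc_bound (cs ++ rest) (i - 1) hlt
        rcases Nat.exists_eq_add_of_le h1 with ⟨k, hk⟩
        subst hk
        simp only [Nat.add_sub_cancel_left] at this
        simp only [Nat.add_comm 1 k, List.getD_cons_succ]
        omega
termination_by f => sz f
decreasing_by rw [sz_cons]; omega

-- label lemmas
lemma lab_append_left {u v : List (PTree X)} {i : ℕ} (hi : i < sz u) :
    lab (u ++ v) i = lab u i := by
  simp [lab, preorderF_append, List.getElem?_append_left hi]

lemma lab_append_right {u v : List (PTree X)} {i : ℕ} (hi : sz u ≤ i) :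
    lab (u ++ v) i = lab v (i - sz u) := by
  simp [lab, preorderF_append, List.getElem?_append_right hi, sz]

lemma lab_zero (a : X) (cs rest : List (PTree X)) :
    lab (PTree.node a cs :: rest) 0 = some a := by
  simp [lab, preorderF_cons']

lemma lab_shift (a : X) (cs rest : List (PTree X)) (i : ℕ) :
    lab (cs ++ rest) i = lab (PTree.node a cs :: rest) (i + 1) := by
  simp [lab, preorderF_cons']

lemma lab_lt {f : List (PTree X)} {i : ℕ} (hi : i < sz f) :
    ∃ a : X, lab f i = some a := by
  have : i < (preorderF f).length := hi
  exact ⟨(preorderF f)[i], by simp [lab, List.getElem?_eq_getElem this]⟩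

lemma lab_ge {f : List (PTree X)} {i : ℕ} (hi : sz f ≤ i) : lab f i = none := by
  simp [lab]; exact hi

-- anc lemmas
lemma anc_lt {f : List (PTree X)} {i j : ℕ} (h : anc f i j) : i < sz f ∧ j < sz f := by
  obtain ⟨h1, h2⟩ := h
  by_cases hi : i < sz f
  · have := (anc_bound f i hi).2
    exact ⟨hi, by omega⟩
  · exfalso
    rw [List.getD_eq_default] at h2
    · omega
    · rw [length_subtreeSizesF]; omega

lemma anc_append_left {u v : List (PTree X)} {i j : ℕ} (hi : i < sz u) :
    anc (u ++ v) i j ↔ anc u i j := by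
  unfold anc
  rw [subtreeSizesF_append, List.getD_append]
  rw [length_subtreeSizesF]; exact hi

lemma anc_append_left_lt {u v : List (PTree X)} {i j : ℕ} (hi : i < sz u)
    (h : anc (u ++ v) i j) : j < sz u := by
  rw [anc_append_left hi] at h
  exact (anc_lt h).2

lemma anc_append_right {u v : List (PTree X)} {i j : ℕ} (hi : sz u ≤ i) (hj : sz u ≤ j) :
    anc (u ++ v) i j ↔ anc v (i - sz u) (j - sz u) := by
  unfold anc
  rw [subtreeSizesF_append, List.getD_append_right]
  · rw [length_subtreeSizesF]
    constructor
    · rintro ⟨h1, h2⟩; exact ⟨by omega, by omega⟩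
    · rintro ⟨h1, h2⟩; exact ⟨by omega, by omega⟩
  · rw [length_subtreeSizesF]; exact hi

lemma anc_shift (a : X) (cs rest : List (PTree X)) (i j : ℕ) :
    anc (cs ++ rest) i j ↔ anc (PTree.node a cs :: rest) (i + 1) (j + 1) := by
  unfold anc
  rw [subtreeSizesF_cons', List.getD_cons_succ]
  omega

lemma anc_single_zero (a : X) (cs : List (PTree X)) (j : ℕ) :
    anc [PTree.node a cs] 0 j ↔ 0 < j ∧ j < sz cs + 1 := by
  unfold anc
  rw [subtreeSizesF_cons, subtreeSizes_node, size_node]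
  simp

lemma anc_single_succ (a : X) (cs : List (PTree X)) {i : ℕ} (j : ℕ) (hi : 1 ≤ i) :
    anc [PTree.node a cs] i j ↔ anc cs (i - 1) (j - 1) := by
  unfold anc
  rw [subtreeSizesF_cons, subtreeSizes_node, size_node]
  obtain ⟨k, rfl⟩ := Nat.exists_eq_add_of_le hi
  simp only [subtreeSizesF_nil, List.append_nil, Nat.add_comm 1 k, List.getD_cons_succ,
    Nat.add_sub_cancel]
  omega

-- shift function
def sh (d i : ℕ) : ℕ := if i < d then i else i + 1

lemma sh_small {d i : ℕ} (h : i < d) : sh d i = i := if_pos h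
lemma sh_big {d i : ℕ} (h : d ≤ i) : sh d i = i + 1 := if_neg (by omega)
lemma sh_le (d i : ℕ) : i ≤ sh d i ∧ sh d i ≤ i + 1 := by unfold sh; split <;> omega
lemma sh_lt_iff {d i j : ℕ} : sh d i < sh d j ↔ i < j := by
  unfold sh; split <;> split <;> omega
lemma sh_eq_iff {d i j : ℕ} : sh d i = sh d j ↔ i = j := by
  unfold sh; split <;> split <;> omega
lemma sh_ne (d i : ℕ) : sh d i ≠ d := by unfold sh; split <;> omega
lemma sh_add {k : ℕ} (d : ℕ) {i : ℕ} (h : k ≤ i) :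
    sh (k + d) i = k + sh d (i - k) := by unfold sh; split <;> split <;> omega
lemma sh_succ {d i : ℕ} (h : 1 ≤ i) : sh (d + 1) i = sh d (i - 1) + 1 := by
  unfold sh; split <;> split <;> omega
lemma sh_zero {d : ℕ} (h : 0 < d) : sh d 0 = 0 := sh_small h

lemma not_anc_zero (f : List (PTree X)) (i : ℕ) : ¬ anc f i 0 := by
  rintro ⟨h, -⟩; omega

/-- `g` is `f` with the node at pre-order position `d` deleted. -/
def DelSpec (f g : List (PTree X)) (d : ℕ) : Prop :=
  d < sz f ∧ sz f = sz g + 1 ∧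
  (∀ i, i < sz g → lab g i = lab f (sh d i)) ∧
  (∀ i j, i < sz g → j < sz g → (anc g i j ↔ anc f (sh d i) (sh d j)))

lemma delSpec_here (l : X) (cs rest : List (PTree X)) :
    DelSpec (PTree.node l cs :: rest) (cs ++ rest) 0 := by
  refine ⟨by rw [sz_cons]; omega, by rw [sz_cons], ?_, ?_⟩
  · intro i _
    rw [sh_big (Nat.zero_le _)]
    exact lab_shift l cs rest i
  · intro i j _ _
    rw [sh_big (Nat.zero_le _), sh_big (Nat.zero_le _)]
    exact anc_shift l cs rest i j

lemma delSpec_append_right (u : List (PTree X)) {v v' : List (PTree X)} {d : ℕ}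
    (h : DelSpec v v' d) : DelSpec (u ++ v) (u ++ v') (sz u + d) := by
  obtain ⟨hd, hsz, hlab, hanc⟩ := h
  set k := sz u with hk
  refine ⟨by rw [sz_append]; omega, by rw [sz_append, sz_append]; omega, ?_, ?_⟩
  · intro i hi
    rw [sz_append] at hi
    by_cases hik : i < k
    · rw [sh_small (by omega), lab_append_left hik, lab_append_left hik]
    · push_neg at hik
      rw [sh_add d hik, lab_append_right hik,
        lab_append_right (show k ≤ k + sh d (i - k) by omega)]
      rw [Nat.add_sub_cancel_left]
      exact hlab _ (by omega)
  · intro i j hi hj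
    rw [sz_append] at hi hj
    by_cases hik : i < k <;> by_cases hjk : j < k
    · rw [sh_small (by omega : i < k + d), sh_small (by omega : j < k + d),
        anc_append_left hik, anc_append_left hik]
    · push_neg at hjk
      rw [sh_small (by omega : i < k + d), sh_add d hjk]
      constructor
      · intro ha
        have := anc_append_left_lt hik ha; omega
      · intro ha
        have := anc_append_left_lt hik ha; omega
    · push_neg at hik
      rw [sh_add d hik, sh_small (by omega : j < k + d)]
      constructor
      · rintro ⟨h1, -⟩; omega
      · rintro ⟨h1, -⟩
        have := (sh_le d (i - k)).1; omega
    · push_neg at hik hjk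
      rw [sh_add d hik, sh_add d hjk,
        anc_append_right hik hjk,
        anc_append_right (show k ≤ k + sh d (i - k) by omega)
          (show k ≤ k + sh d (j - k) by omega),
        Nat.add_sub_cancel_left, Nat.add_sub_cancel_left]
      exact hanc _ _ (by omega) (by omega)

lemma delSpec_append_left (v : List (PTree X)) {u u' : List (PTree X)} {d : ℕ}
    (h : DelSpec u u' d) : DelSpec (u ++ v) (u' ++ v) d := by
  obtain ⟨hd, hsz, hlab, hanc⟩ := h
  set k' := sz u' with hk'
  have hsz' : sz u = k' + 1 := hsz
  have hshlt : ∀ i : ℕ, i < k' → sh d i < sz u := by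
    intro i hi; have := (sh_le d i).2; omega
  refine ⟨by rw [sz_append]; omega, by rw [sz_append, sz_append]; omega, ?_, ?_⟩
  · intro i hi
    rw [sz_append] at hi
    by_cases hik : i < k'
    · rw [lab_append_left hik, hlab i hik, lab_append_left (hshlt i hik)]
    · push_neg at hik
      rw [lab_append_right hik, sh_big (by omega),
        lab_append_right (show sz u ≤ i + 1 by omega)]
      congr 1; omega
  · intro i j hi hj
    rw [sz_append] at hi hj
    by_cases hik : i < k' <;> by_cases hjk : j < k'
    · rw [anc_append_left hik, anc_append_left (hshlt i hik)]
      exact hanc i j hik hjk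
    · push_neg at hjk
      have hdj : sh d j = j + 1 := sh_big (by omega)
      constructor
      · intro ha
        have := anc_append_left_lt hik ha; omega
      · intro ha
        have h2 := anc_append_left_lt (hshlt i hik) ha
        omega
    · push_neg at hik
      constructor
      · rintro ⟨h1, -⟩; omega
      · rintro ⟨h1, -⟩
        have := (sh_le d i).1
        have := (sh_le d j).2; omega
    · push_neg at hik hjk
      rw [anc_append_right hik hjk, sh_big (by omega), sh_big (by omega),
        anc_append_right (show sz u ≤ i + 1 by omega) (show sz u ≤ j + 1 by omega)]
      rw [hsz']
      have e1 : i + 1 - (k' + 1) = i - k' := by omega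
      have e2 : j + 1 - (k' + 1) = j - k' := by omega
      rw [e1, e2]

lemma delSpec_root (z : X) {cs cs' : List (PTree X)} {d : ℕ}
    (h : DelSpec cs cs' d) : DelSpec [PTree.node z cs] [PTree.node z cs'] (d + 1) := by
  obtain ⟨hd, hsz, hlab, hanc⟩ := h
  have hs1 : sz [PTree.node z cs] = sz cs + 1 := by rw [sz_single, size_node]
  have hs2 : sz [PTree.node z cs'] = sz cs' + 1 := by rw [sz_single, size_node]
  refine ⟨by omega, by omega, ?_, ?_⟩
  · intro i hi
    rw [hs2] at hi
    rcases Nat.eq_zero_or_pos i with rfl | hpos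
    · rw [sh_zero (by omega)]
      rw [show [PTree.node z cs'] = PTree.node z cs' :: ([] : List (PTree X)) from rfl,
        show [PTree.node z cs] = PTree.node z cs :: ([] : List (PTree X)) from rfl,
        lab_zero, lab_zero]
    · rw [sh_succ hpos]
      have h1 : lab [PTree.node z cs'] i = lab (cs' ++ []) (i - 1) := by
        rw [lab_shift z cs' []]; congr 1; omega
      have h2 : lab [PTree.node z cs] (sh d (i - 1) + 1) = lab (cs ++ []) (sh d (i - 1)) := by
        rw [lab_shift z cs []]
      rw [h1, h2, List.append_nil, List.append_nil]
      exact hlab _ (by omega)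
  · intro i j hi hj
    rw [hs2] at hi hj
    rcases Nat.eq_zero_or_pos j with rfl | hjpos
    · rw [sh_zero (by omega)]
      simp [not_anc_zero]
    rcases Nat.eq_zero_or_pos i with rfl | hipos
    · rw [sh_zero (by omega)]
      rw [anc_single_zero, anc_single_zero]
      have := (sh_le (d+1) j).1
      have := (sh_le (d+1) j).2
      omega
    · rw [sh_succ hipos, sh_succ hjpos,
        anc_single_succ z cs' j hipos,
        anc_single_succ z cs (sh d (j-1) + 1) (by omega)]
      simp only [Nat.add_sub_cancel]
      exact hanc _ _ (by omega) (by omega)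

lemma deletes_delSpec {f g : List (PTree X)} {l : X} (h : Deletes f g l) :
    ∃ d, DelSpec f g d ∧ lab f d = some l := by
  induction h with
  | here l cs rest =>
      exact ⟨0, delSpec_here l cs rest, lab_zero l cs rest⟩
  | @child cs cs' l z rest hdel ih =>
      obtain ⟨d, hspec, hlab⟩ := ih
      refine ⟨d + 1, ?_, ?_⟩
      · have := delSpec_append_left rest (delSpec_root z hspec)
        simpa using this
      · have hd : d < sz cs := hspec.1
        rw [show (PTree.node z cs :: rest) = PTree.node z cs :: rest from rfl]
        rw [← lab_shift z cs rest d, lab_append_left hd]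
        exact hlab
  | @skip rest rest' l t hdel ih =>
      obtain ⟨d, hspec, hlab⟩ := ih
      refine ⟨size t + d, ?_, ?_⟩
      · have := delSpec_append_right [t] hspec
        rw [sz_single] at this
        simpa using this
      · rw [show (t :: rest) = [t] ++ rest from rfl,
          lab_append_right (by rw [sz_single]; omega)]
        rw [sz_single]
        simpa [Nat.add_sub_cancel_left] using hlab


def unsh (d i : ℕ) : ℕ := if i < d then i else i - 1

lemma sh_unsh {d i : ℕ} (h : i ≠ d) : sh d (unsh d i) = i := by
  rcases lt_or_gt_of_ne h with h1 | h1
  · rw [unsh, if_pos h1, sh, if_pos h1]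
  · rw [unsh, if_neg (by omega), sh, if_neg (by omega)]
    omega

lemma unsh_sh (d i : ℕ) : unsh d (sh d i) = i := by
  by_cases h1 : i < d
  · rw [sh, if_pos h1, unsh, if_pos h1]
  · rw [sh, if_neg h1, unsh, if_neg (by omega)]
    omega

/-- A (generalized) tree mapping between forests, with `ℕ` pre-order indices. -/
def NM (f g : List (PTree X)) (M : Finset (ℕ × ℕ)) : Prop :=
  (∀ p ∈ M, p.1 < sz f ∧ p.2 < sz g) ∧
  (∀ p ∈ M, ∀ q ∈ M,
    (p.1 = q.1 ↔ p.2 = q.2) ∧ (p.1 < q.1 ↔ p.2 < q.2) ∧ (anc f p.1 q.1 ↔ anc g p.2 q.2))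

/-- The cost of a generalized tree mapping. -/
noncomputable def ncost (c : Option X → Option X → ℝ) (f g : List (PTree X))
    (M : Finset (ℕ × ℕ)) : ℝ :=
  (∑ p ∈ M, c (lab f p.1) (lab g p.2))
    + (∑ i ∈ Finset.range (sz f), if ∀ p ∈ M, p.1 ≠ i then c (lab f i) none else 0)
    + (∑ j ∈ Finset.range (sz g), if ∀ p ∈ M, p.2 ≠ j then c none (lab g j) else 0)

lemma NM_fst_inj {f g : List (PTree X)} {M : Finset (ℕ × ℕ)} (hM : NM f g M)
    {p q : ℕ × ℕ} (hp : p ∈ M) (hq : q ∈ M) (h : p.1 = q.1) : p = q :=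
  Prod.ext h (((hM.2 p hp q hq).1).mp h)

lemma NM_snd_inj {f g : List (PTree X)} {M : Finset (ℕ × ℕ)} (hM : NM f g M)
    {p q : ℕ × ℕ} (hp : p ∈ M) (hq : q ∈ M) (h : p.2 = q.2) : p = q :=
  Prod.ext (((hM.2 p hp q hq).1).mpr h) h

lemma range_erase_eq_image_sh {d n : ℕ} (hd : d < n + 1) :
    (Finset.range (n + 1)).erase d = (Finset.range n).image (sh d) := by
  ext k
  simp only [Finset.mem_erase, Finset.mem_range, Finset.mem_image]
  constructor
  · rintro ⟨hne, hk⟩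
    by_cases h : k < d
    · exact ⟨k, by omega, sh_small h⟩
    · exact ⟨k - 1, by omega, by rw [sh_big (by omega)]; omega⟩
  · rintro ⟨i, hi, rfl⟩
    refine ⟨sh_ne d i, ?_⟩
    have := (sh_le d i).2; omega

lemma sum_range_succ_sh {n d : ℕ} (F : ℕ → ℝ) (hd : d < n + 1) :
    ∑ i ∈ Finset.range (n + 1), F i = F d + ∑ i ∈ Finset.range n, F (sh d i) := by
  rw [← Finset.add_sum_erase _ F (Finset.mem_range.mpr hd),
    range_erase_eq_image_sh hd, Finset.sum_image]
  intro a _ b _ h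
  exact sh_eq_iff.mp h

/-- Local copy of the pseudo-metric property. -/
def PM (c : Option X → Option X → ℝ) : Prop :=
  (∀ a b, 0 ≤ c a b) ∧ (∀ a b, c a b = c b a) ∧ (∀ a, c a a = 0) ∧
    (∀ a b d, c a d ≤ c a b + c b d)


lemma ncost_nonneg {c : Option X → Option X → ℝ} (hc : PM c)
    (f g : List (PTree X)) (M : Finset (ℕ × ℕ)) : 0 ≤ ncost c f g M := by
  unfold ncost
  have h1 : (0:ℝ) ≤ ∑ p ∈ M, c (lab f p.1) (lab g p.2) :=
    Finset.sum_nonneg fun p _ => hc.1 _ _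
  have h2 : (0:ℝ) ≤ ∑ i ∈ Finset.range (sz f),
      if ∀ p ∈ M, p.1 ≠ i then c (lab f i) none else 0 := by
    refine Finset.sum_nonneg fun i _ => ?_
    split
    exacts [hc.1 _ _, le_rfl]
  have h3 : (0:ℝ) ≤ ∑ j ∈ Finset.range (sz g),
      if ∀ p ∈ M, p.2 ≠ j then c none (lab g j) else 0 := by
    refine Finset.sum_nonneg fun j _ => ?_
    split
    exacts [hc.1 _ _, le_rfl]
  linarith

lemma NM_del {c : Option X → Option X → ℝ} {f g h : List (PTree X)} {d : ℕ} {l : X}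
    {M : Finset (ℕ × ℕ)} (hs : DelSpec f g d) (hl : lab f d = some l) (hM : NM g h M) :
    ∃ M', NM f h M' ∧ ncost c f h M' = c (some l) none + ncost c g h M := by
  obtain ⟨hd, hsz, hlab, hanc⟩ := hs
  set φ : ℕ × ℕ → ℕ × ℕ := fun p => (sh d p.1, p.2) with hφ
  have hinj : ∀ p q : ℕ × ℕ, φ p = φ q → p = q := by
    intro p q hpq
    simp only [hφ, Prod.mk.injEq] at hpq
    exact Prod.ext (sh_eq_iff.mp hpq.1) hpq.2
  refine ⟨M.image φ, ⟨?_, ?_⟩, ?_⟩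
  · intro p' hp'
    obtain ⟨p, hp, rfl⟩ := Finset.mem_image.mp hp'
    have hb := hM.1 p hp
    have := (sh_le d p.1).2
    exact ⟨by simp only [hφ]; omega, hb.2⟩
  · intro p' hp' q' hq'
    obtain ⟨p, hp, rfl⟩ := Finset.mem_image.mp hp'
    obtain ⟨q, hq, rfl⟩ := Finset.mem_image.mp hq'
    have conds := hM.2 p hp q hq
    have hbp := hM.1 p hp
    have hbq := hM.1 q hq
    exact ⟨sh_eq_iff.trans conds.1, sh_lt_iff.trans conds.2.1,
      ((hanc p.1 q.1 hbp.1 hbq.1).symm).trans conds.2.2⟩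
  · have hsum1 : ∑ p' ∈ M.image φ, c (lab f p'.1) (lab h p'.2)
        = ∑ p ∈ M, c (lab g p.1) (lab h p.2) := by
      rw [Finset.sum_image (fun a _ b _ hab => hinj a b hab)]
      refine Finset.sum_congr rfl fun p hp => ?_
      rw [hlab p.1 (hM.1 p hp).1]
    have hcond : ∀ i < sz g, ((∀ p' ∈ M.image φ, p'.1 ≠ sh d i) ↔ (∀ p ∈ M, p.1 ≠ i)) := by
      intro i _
      constructor
      · intro hh p hp hpi
        exact hh (φ p) (Finset.mem_image_of_mem φ hp) (by simp [hφ, hpi])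
      · intro hh p' hp' hpi
        obtain ⟨p, hp, rfl⟩ := Finset.mem_image.mp hp'
        exact hh p hp (sh_eq_iff.mp hpi)
    have hsum2 : (∑ i ∈ Finset.range (sz f),
          if ∀ p ∈ M.image φ, p.1 ≠ i then c (lab f i) none else 0)
        = c (some l) none + ∑ i ∈ Finset.range (sz g),
            (if ∀ p ∈ M, p.1 ≠ i then c (lab g i) none else 0) := by
      rw [hsz, sum_range_succ_sh _ (by omega : d < sz g + 1)]
      congr 1
      · rw [if_pos, hl]
        intro p' hp'
        obtain ⟨p, hp, rfl⟩ := Finset.mem_image.mp hp'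
        exact sh_ne d p.1
      · refine Finset.sum_congr rfl fun i hi => ?_
        have hi' := Finset.mem_range.mp hi
        exact if_congr (hcond i hi') (by rw [hlab i hi']) rfl
    have hsum3 : (∑ j ∈ Finset.range (sz h),
          if ∀ p ∈ M.image φ, p.2 ≠ j then c none (lab h j) else 0)
        = ∑ j ∈ Finset.range (sz h), (if ∀ p ∈ M, p.2 ≠ j then c none (lab h j) else 0) := by
      refine Finset.sum_congr rfl fun j _ => ?_
      refine if_congr ?_ rfl rfl
      constructor
      · intro hh p hp
        exact hh (φ p) (Finset.mem_image_of_mem φ hp)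
      · intro hh p' hp'
        obtain ⟨p, hp, rfl⟩ := Finset.mem_image.mp hp'
        exact hh p hp
    unfold ncost
    rw [hsum1, hsum2, hsum3]
    ring


lemma NM_ins {c : Option X → Option X → ℝ} (hc : PM c) {f g h : List (PTree X)}
    {d : ℕ} {l : X} {M : Finset (ℕ × ℕ)}
    (hs : DelSpec g f d) (hl : lab g d = some l) (hM : NM g h M) :
    ∃ M', NM f h M' ∧ ncost c f h M' ≤ c none (some l) + ncost c g h M := by
  classical
  obtain ⟨hd, hsz, hlab, hanc⟩ := hs
  set ψ : ℕ × ℕ → ℕ × ℕ := fun p => (unsh d p.1, p.2) with hψ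
  set M0 : Finset (ℕ × ℕ) := M.filter (fun p => p.1 ≠ d) with hM0
  have hM0mem : ∀ p ∈ M0, p ∈ M ∧ p.1 ≠ d := by
    intro p hp
    exact ⟨(Finset.mem_filter.mp hp).1, (Finset.mem_filter.mp hp).2⟩
  have hsh_unsh : ∀ p ∈ M0, sh d (unsh d p.1) = p.1 := fun p hp => sh_unsh (hM0mem p hp).2
  have hbnd : ∀ p ∈ M0, unsh d p.1 < sz f := by
    intro p hp
    have h1 := (hM.1 p (hM0mem p hp).1).1
    have h2 := (hM0mem p hp).2
    unfold unsh; split <;> omega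
  have hinj : ∀ p ∈ M0, ∀ q ∈ M0, ψ p = ψ q → p = q := by
    intro p hp q hq hpq
    simp only [hψ, Prod.mk.injEq] at hpq
    have : p.1 = q.1 := by
      rw [← hsh_unsh p hp, ← hsh_unsh q hq, hpq.1]
    exact Prod.ext this hpq.2
  refine ⟨M0.image ψ, ⟨?_, ?_⟩, ?_⟩
  · intro p' hp'
    obtain ⟨p, hp, rfl⟩ := Finset.mem_image.mp hp'
    exact ⟨hbnd p hp, (hM.1 p (hM0mem p hp).1).2⟩
  · intro p' hp' q' hq'
    obtain ⟨p, hp, rfl⟩ := Finset.mem_image.mp hp'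
    obtain ⟨q, hq, rfl⟩ := Finset.mem_image.mp hq'
    have conds := hM.2 p (hM0mem p hp).1 q (hM0mem q hq).1
    simp only [hψ]
    refine ⟨?_, ?_, ?_⟩
    · constructor
      · intro he
        exact conds.1.mp (by rw [← hsh_unsh p hp, ← hsh_unsh q hq, he])
      · intro he
        have h1 : p.1 = q.1 := conds.1.mpr he
        rw [← unsh_sh d (unsh d p.1), hsh_unsh p hp, h1, ← hsh_unsh q hq, unsh_sh]
    · constructor
      · intro hlt
        refine conds.2.1.mp ?_
        rw [← hsh_unsh p hp, ← hsh_unsh q hq]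
        exact sh_lt_iff.mpr hlt
      · intro hlt
        have : sh d (unsh d p.1) < sh d (unsh d q.1) := by
          rw [hsh_unsh p hp, hsh_unsh q hq]; exact conds.2.1.mpr hlt
        exact sh_lt_iff.mp this
    · have := hanc (unsh d p.1) (unsh d q.1) (hbnd p hp) (hbnd q hq)
      rw [hsh_unsh p hp, hsh_unsh q hq] at this
      exact this.trans conds.2.2
  · -- cost estimate
    have hmatch : ∑ p' ∈ M0.image ψ, c (lab f p'.1) (lab h p'.2)
        = ∑ p ∈ M0, c (lab g p.1) (lab h p.2) := by
      rw [Finset.sum_image hinj]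
      refine Finset.sum_congr rfl fun p hp => ?_
      rw [hlab _ (hbnd p hp), hsh_unsh p hp]
    have hfcond : ∀ i, i < sz f →
        ((∀ p' ∈ M0.image ψ, p'.1 ≠ i) ↔ (∀ p ∈ M, p.1 ≠ sh d i)) := by
      intro i _
      constructor
      · intro hh p hp hpe
        have hpd : p.1 ≠ d := by rw [hpe]; exact sh_ne d i
        have hpM0 : p ∈ M0 := Finset.mem_filter.mpr ⟨hp, hpd⟩
        refine hh (ψ p) (Finset.mem_image_of_mem ψ hpM0) ?_
        simp only [hψ]
        rw [hpe, unsh_sh]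
      · intro hh p' hp' hpe
        obtain ⟨p, hp, rfl⟩ := Finset.mem_image.mp hp'
        refine hh p (hM0mem p hp).1 ?_
        rw [← hsh_unsh p hp]
        simp only [hψ] at hpe
        rw [hpe]
    have hfsum : (∑ i ∈ Finset.range (sz f),
          if ∀ p ∈ M0.image ψ, p.1 ≠ i then c (lab f i) none else 0)
        = ∑ i ∈ Finset.range (sz f),
            (if ∀ p ∈ M, p.1 ≠ sh d i then c (lab g (sh d i)) none else 0) := by
      refine Finset.sum_congr rfl fun i hi => ?_
      have hi' := Finset.mem_range.mp hi
      exact if_congr (hfcond i hi') (by rw [hlab i hi']) rfl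
    have hgsum : (∑ i ∈ Finset.range (sz g),
          if ∀ p ∈ M, p.1 ≠ i then c (lab g i) none else 0)
        = (if ∀ p ∈ M, p.1 ≠ d then c (lab g d) none else 0)
          + ∑ i ∈ Finset.range (sz f),
              (if ∀ p ∈ M, p.1 ≠ sh d i then c (lab g (sh d i)) none else 0) := by
      rw [hsz, sum_range_succ_sh _ (by omega : d < sz f + 1)]
    by_cases hA : ∀ p ∈ M, p.1 ≠ d
    · have hM0eq : M0 = M := by
        rw [hM0]
        exact Finset.filter_true_of_mem hA
      have hhsum : (∑ j ∈ Finset.range (sz h),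
            if ∀ p ∈ M0.image ψ, p.2 ≠ j then c none (lab h j) else 0)
          = ∑ j ∈ Finset.range (sz h),
              (if ∀ p ∈ M, p.2 ≠ j then c none (lab h j) else 0) := by
        refine Finset.sum_congr rfl fun j _ => ?_
        refine if_congr ?_ rfl rfl
        rw [hM0eq]
        constructor
        · intro hh p hp
          exact hh (ψ p) (Finset.mem_image_of_mem ψ hp)
        · intro hh p' hp'
          obtain ⟨p, hp, rfl⟩ := Finset.mem_image.mp hp'
          exact hh p hp
      have h0 : (0:ℝ) ≤ c none (some l) := hc.1 _ _
      have h1 : (0:ℝ) ≤ c (lab g d) none := hc.1 _ _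
      unfold ncost
      rw [hmatch, hfsum, hhsum, hM0eq, hgsum, if_pos hA]
      linarith
    · push_neg at hA
      obtain ⟨p₀, hp₀, hp₀d⟩ := hA
      have hM0eq : M0 = M.erase p₀ := by
        ext p
        simp only [hM0, Finset.mem_filter, Finset.mem_erase]
        constructor
        · rintro ⟨hp, hpd⟩
          exact ⟨fun he => hpd (he ▸ hp₀d), hp⟩
        · rintro ⟨hne, hp⟩
          refine ⟨hp, fun he => hne ?_⟩
          exact NM_fst_inj hM hp hp₀ (he.trans hp₀d.symm)
      have hmatch2 : ∑ p ∈ M, c (lab g p.1) (lab h p.2)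
          = c (lab g p₀.1) (lab h p₀.2) + ∑ p ∈ M0, c (lab g p.1) (lab h p.2) := by
        rw [hM0eq]
        exact (Finset.add_sum_erase M (fun p => c (lab g p.1) (lab h p.2)) hp₀).symm
      set j₀ := p₀.2 with hj₀
      have hj₀lt : j₀ < sz h := (hM.1 p₀ hp₀).2
      have hcondj₀ : ∀ p ∈ M0.image ψ, p.2 ≠ j₀ := by
        intro p' hp' he
        obtain ⟨p, hp, rfl⟩ := Finset.mem_image.mp hp'
        have : p = p₀ := NM_snd_inj hM (hM0mem p hp).1 hp₀ he
        exact (hM0mem p hp).2 (this ▸ hp₀d)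
      have hcondM : ¬ (∀ p ∈ M, p.2 ≠ j₀) := fun hh => hh p₀ hp₀ rfl
      have hhsum : (∑ j ∈ Finset.range (sz h),
            if ∀ p ∈ M0.image ψ, p.2 ≠ j then c none (lab h j) else 0)
          = c none (lab h j₀) + ∑ j ∈ Finset.range (sz h),
              (if ∀ p ∈ M, p.2 ≠ j then c none (lab h j) else 0) := by
        rw [← Finset.add_sum_erase _ _ (Finset.mem_range.mpr hj₀lt),
           ← Finset.add_sum_erase _
             (fun j => if ∀ p ∈ M, p.2 ≠ j then c none (lab h j) else 0)
             (Finset.mem_range.mpr hj₀lt)]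
        rw [if_pos hcondj₀, if_neg hcondM]
        rw [zero_add]
        congr 1
        refine Finset.sum_congr rfl fun j hj => ?_
        have hjne : j ≠ j₀ := (Finset.mem_erase.mp hj).1
        refine if_congr ?_ rfl rfl
        constructor
        · intro hh p hp he
          by_cases hpp : p = p₀
          · exact hjne (by rw [← he, hpp])
          · have hpM0 : p ∈ M0 := by
              rw [hM0eq]; exact Finset.mem_erase.mpr ⟨hpp, hp⟩
            exact hh (ψ p) (Finset.mem_image_of_mem ψ hpM0) he
        · intro hh p' hp' he
          obtain ⟨p, hp, rfl⟩ := Finset.mem_image.mp hp'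
          exact hh p (hM0mem p hp).1 he
      have htri : c none (lab h j₀) ≤ c none (some l) + c (some l) (lab h j₀) :=
        hc.2.2.2 _ _ _
      have hgd : lab g p₀.1 = some l := by rw [hp₀d, hl]
      unfold ncost
      rw [hmatch, hfsum, hhsum, hmatch2, hgsum, hgd]
      have h2 : (0:ℝ) ≤ (if ∀ p ∈ M, p.1 ≠ d then c (lab g d) none else 0) := by
        split
        exacts [hc.1 _ _, le_rfl]
      linarith


/-- `g` is `f` with the label of the node at position `d` changed. -/
def RepSpec (f g : List (PTree X)) (d : ℕ) : Prop :=
  d < sz f ∧ sz g = sz f ∧ (∀ i, i ≠ d → lab g i = lab f i) ∧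
    subtreeSizesF g = subtreeSizesF f

lemma repSpec_here (l l' : X) (cs rest : List (PTree X)) :
    RepSpec (PTree.node l cs :: rest) (PTree.node l' cs :: rest) 0 := by
  refine ⟨by rw [sz_cons]; omega, by rw [sz_cons, sz_cons], ?_, ?_⟩
  · intro i hi
    rcases Nat.exists_eq_add_of_le (show 1 ≤ i by omega) with ⟨k, rfl⟩
    rw [Nat.add_comm 1 k, ← lab_shift, ← lab_shift]
  · rw [subtreeSizesF_cons', subtreeSizesF_cons']

lemma repSpec_append_right (u : List (PTree X)) {v v' : List (PTree X)} {d : ℕ}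
    (h : RepSpec v v' d) : RepSpec (u ++ v) (u ++ v') (sz u + d) := by
  obtain ⟨hd, hsz, hlab, hss⟩ := h
  refine ⟨by rw [sz_append]; omega, by rw [sz_append, sz_append, hsz], ?_, ?_⟩
  · intro i hi
    by_cases hik : i < sz u
    · rw [lab_append_left hik, lab_append_left hik]
    · push_neg at hik
      rw [lab_append_right hik, lab_append_right hik]
      exact hlab _ (by omega)
  · rw [subtreeSizesF_append, subtreeSizesF_append, hss]

lemma repSpec_append_left (v : List (PTree X)) {u u' : List (PTree X)} {d : ℕ}
    (h : RepSpec u u' d) : RepSpec (u ++ v) (u' ++ v) d := by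
  obtain ⟨hd, hsz, hlab, hss⟩ := h
  refine ⟨by rw [sz_append]; omega, by rw [sz_append, sz_append, hsz], ?_, ?_⟩
  · intro i hi
    by_cases hik : i < sz u
    · rw [lab_append_left (by omega : i < sz u'), lab_append_left hik]
      exact hlab _ hi
    · push_neg at hik
      rw [lab_append_right (by omega : sz u' ≤ i), lab_append_right hik, hsz]
  · rw [subtreeSizesF_append, subtreeSizesF_append, hss]

lemma repSpec_root (z : X) {cs cs' : List (PTree X)} {d : ℕ}
    (h : RepSpec cs cs' d) : RepSpec [PTree.node z cs] [PTree.node z cs'] (d + 1) := by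
  obtain ⟨hd, hsz, hlab, hss⟩ := h
  have hs1 : sz [PTree.node z cs] = sz cs + 1 := by rw [sz_single, size_node]
  have hs2 : sz [PTree.node z cs'] = sz cs' + 1 := by rw [sz_single, size_node]
  refine ⟨by omega, by omega, ?_, ?_⟩
  · intro i hi
    rcases Nat.eq_zero_or_pos i with rfl | hpos
    · rw [show [PTree.node z cs'] = PTree.node z cs' :: ([] : List (PTree X)) from rfl,
        show [PTree.node z cs] = PTree.node z cs :: ([] : List (PTree X)) from rfl,
        lab_zero, lab_zero]
    · rcases Nat.exists_eq_add_of_le hpos with ⟨k, rfl⟩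
      rw [Nat.add_comm 1 k, ← lab_shift z cs' [], ← lab_shift z cs []]
      simp only [List.append_nil]
      exact hlab _ (by omega)
  · rw [subtreeSizesF_cons, subtreeSizesF_cons, subtreeSizes_node, subtreeSizes_node,
      size_node, size_node, hsz, hss]

lemma replaces_repSpec {f g : List (PTree X)} {l l' : X} (h : Replaces f g l l') :
    ∃ d, RepSpec f g d ∧ lab f d = some l ∧ lab g d = some l' := by
  induction h with
  | here l l' cs rest =>
      exact ⟨0, repSpec_here l l' cs rest, lab_zero l cs rest, lab_zero l' cs rest⟩
  | @child cs cs' l l' z rest hrep ih =>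
      obtain ⟨d, hspec, hlf, hlg⟩ := ih
      have hd : d < sz cs := hspec.1
      have hd' : d < sz cs' := by
        have := hspec.2.1; omega
      refine ⟨d + 1, ?_, ?_, ?_⟩
      · have := repSpec_append_left rest (repSpec_root z hspec)
        simpa using this
      · rw [← lab_shift z cs rest d, lab_append_left hd]; exact hlf
      · rw [← lab_shift z cs' rest d, lab_append_left hd']; exact hlg
  | @skip rest rest' l l' t hrep ih =>
      obtain ⟨d, hspec, hlf, hlg⟩ := ih
      refine ⟨size t + d, ?_, ?_, ?_⟩
      · have := repSpec_append_right [t] hspec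
        rw [sz_single] at this
        simpa using this
      · rw [show (t :: rest) = [t] ++ rest from rfl,
          lab_append_right (by rw [sz_single]; omega), sz_single]
        simpa [Nat.add_sub_cancel_left] using hlf
      · rw [show (t :: rest') = [t] ++ rest' from rfl,
          lab_append_right (by rw [sz_single]; omega), sz_single]
        simpa [Nat.add_sub_cancel_left] using hlg

lemma NM_rep {c : Option X → Option X → ℝ} (hc : PM c) {f g h : List (PTree X)}
    {d : ℕ} {l l' : X} {M : Finset (ℕ × ℕ)}
    (hs : RepSpec f g d) (hlf : lab f d = some l) (hlg : lab g d = some l') (hM : NM g h M) :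
    ∃ M', NM f h M' ∧ ncost c f h M' ≤ c (some l) (some l') + ncost c g h M := by
  classical
  obtain ⟨hd, hsz, hlab, hss⟩ := hs
  have hanc : ∀ i j, anc f i j ↔ anc g i j := by
    intro i j; unfold anc; rw [hss]
  refine ⟨M, ⟨?_, ?_⟩, ?_⟩
  · intro p hp
    have := hM.1 p hp
    exact ⟨by omega, this.2⟩
  · intro p hp q hq
    have conds := hM.2 p hp q hq
    exact ⟨conds.1, conds.2.1, (hanc p.1 q.1).trans conds.2.2⟩
  · have hhsum : (∑ j ∈ Finset.range (sz h),
        if ∀ p ∈ M, p.2 ≠ j then c none (lab h j) else 0)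
        = ∑ j ∈ Finset.range (sz h), (if ∀ p ∈ M, p.2 ≠ j then c none (lab h j) else 0) := rfl
    by_cases hA : ∀ p ∈ M, p.1 ≠ d
    · have hmatch : ∑ p ∈ M, c (lab f p.1) (lab h p.2)
          = ∑ p ∈ M, c (lab g p.1) (lab h p.2) := by
        refine Finset.sum_congr rfl fun p hp => ?_
        rw [hlab p.1 (hA p hp)]
      have hfsum : (∑ i ∈ Finset.range (sz f),
            if ∀ p ∈ M, p.1 ≠ i then c (lab f i) none else 0)
          ≤ c (some l) (some l')
            + ∑ i ∈ Finset.range (sz g), (if ∀ p ∈ M, p.1 ≠ i then c (lab g i) none else 0) := by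
        rw [hsz]
        rw [← Finset.add_sum_erase _ _ (Finset.mem_range.mpr hd),
          ← Finset.add_sum_erase _
            (fun i => if ∀ p ∈ M, p.1 ≠ i then c (lab g i) none else 0)
            (Finset.mem_range.mpr hd)]
        have hrest : ∑ i ∈ (Finset.range (sz f)).erase d,
              (if ∀ p ∈ M, p.1 ≠ i then c (lab f i) none else 0)
            = ∑ i ∈ (Finset.range (sz f)).erase d,
              (if ∀ p ∈ M, p.1 ≠ i then c (lab g i) none else 0) := by
          refine Finset.sum_congr rfl fun i hi => ?_
          rw [hlab i (Finset.mem_erase.mp hi).1]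
        rw [hrest, if_pos hA, if_pos hA, hlf, hlg]
        have := hc.2.2.2 (some l) (some l') none
        linarith
      unfold ncost
      rw [hmatch]
      linarith
    · push_neg at hA
      obtain ⟨p₀, hp₀, hp₀d⟩ := hA
      have hfsum : (∑ i ∈ Finset.range (sz f),
            if ∀ p ∈ M, p.1 ≠ i then c (lab f i) none else 0)
          = ∑ i ∈ Finset.range (sz g), (if ∀ p ∈ M, p.1 ≠ i then c (lab g i) none else 0) := by
        rw [hsz]
        refine Finset.sum_congr rfl fun i _ => ?_
        by_cases hid : i = d
        · subst hid
          rw [if_neg (fun hh => hh p₀ hp₀ hp₀d), if_neg (fun hh => hh p₀ hp₀ hp₀d)]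
        · rw [hlab i hid]
      have hmatch : ∑ p ∈ M, c (lab f p.1) (lab h p.2)
          ≤ c (some l) (some l') + ∑ p ∈ M, c (lab g p.1) (lab h p.2) := by
        rw [← Finset.add_sum_erase M (fun p => c (lab f p.1) (lab h p.2)) hp₀,
          ← Finset.add_sum_erase M (fun p => c (lab g p.1) (lab h p.2)) hp₀]
        have hrest : ∑ p ∈ M.erase p₀, c (lab f p.1) (lab h p.2)
            = ∑ p ∈ M.erase p₀, c (lab g p.1) (lab h p.2) := by
          refine Finset.sum_congr rfl fun p hp => ?_
          have hpd : p.1 ≠ d := by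
            intro he
            exact (Finset.mem_erase.mp hp).1 (NM_fst_inj hM (Finset.mem_erase.mp hp).2 hp₀
              (he.trans hp₀d.symm))
          rw [hlab p.1 hpd]
        rw [hrest, hp₀d, hlf, hlg]
        have := hc.2.2.2 (some l) (some l') (lab h p₀.2)
        linarith
      unfold ncost
      rw [hfsum]
      linarith

lemma NM_refl {c : Option X → Option X → ℝ} (hc : PM c) (f : List (PTree X)) :
    ∃ M, NM f f M ∧ ncost c f f M = 0 := by
  classical
  set D : Finset (ℕ × ℕ) := (Finset.range (sz f)).image (fun i => (i, i)) with hD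
  have hmem : ∀ p ∈ D, p.1 = p.2 ∧ p.1 < sz f := by
    intro p hp
    obtain ⟨i, hi, rfl⟩ := Finset.mem_image.mp hp
    exact ⟨rfl, Finset.mem_range.mp hi⟩
  refine ⟨D, ⟨?_, ?_⟩, ?_⟩
  · intro p hp
    obtain ⟨he, hlt⟩ := hmem p hp
    exact ⟨hlt, he ▸ hlt⟩
  · intro p hp q hq
    obtain ⟨hep, -⟩ := hmem p hp
    obtain ⟨heq, -⟩ := hmem q hq
    rw [← hep, ← heq]
    exact ⟨Iff.rfl, Iff.rfl, Iff.rfl⟩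
  · have h1 : ∑ p ∈ D, c (lab f p.1) (lab f p.2) = 0 := by
      refine Finset.sum_eq_zero fun p hp => ?_
      rw [(hmem p hp).1]
      exact hc.2.2.1 _
    have h2 : (∑ i ∈ Finset.range (sz f),
        if ∀ p ∈ D, p.1 ≠ i then c (lab f i) none else 0) = 0 := by
      refine Finset.sum_eq_zero fun i hi => ?_
      rw [if_neg]
      intro hh
      exact hh (i, i) (Finset.mem_image_of_mem _ hi) rfl
    have h3 : (∑ j ∈ Finset.range (sz f),
        if ∀ p ∈ D, p.2 ≠ j then c none (lab f j) else 0) = 0 := by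
      refine Finset.sum_eq_zero fun j hj => ?_
      rw [if_neg]
      intro hh
      exact hh (j, j) (Finset.mem_image_of_mem _ hj) rfl
    unfold ncost
    rw [h1, h2, h3]
    ring

/-- Direction B: every edit script gives a mapping of no greater cost. -/
lemma script_to_NM {c : Option X → Option X → ℝ} (hc : PM c) {f g : List (PTree X)} {r : ℝ}
    (h : Script c f g r) : ∃ M, NM f g M ∧ ncost c f g M ≤ r := by
  induction h with
  | nil f =>
      obtain ⟨M, h1, h2⟩ := NM_refl hc f
      exact ⟨M, h1, le_of_eq h2⟩
  | @cons f g h r s step scr ih =>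
      obtain ⟨M, hM, hMc⟩ := ih
      cases step with
      | @del l hdel =>
          obtain ⟨d, hspec, hl⟩ := deletes_delSpec hdel
          obtain ⟨M', h1, h2⟩ := NM_del hspec hl hM
          exact ⟨M', h1, by rw [h2]; linarith⟩
      | @ins l hdel =>
          obtain ⟨d, hspec, hl⟩ := deletes_delSpec hdel
          obtain ⟨M', h1, h2⟩ := NM_ins hc hspec hl hM
          exact ⟨M', h1, by linarith⟩
      | @rep l l' hrep =>
          obtain ⟨d, hspec, hlf, hlg⟩ := replaces_repSpec hrep
          obtain ⟨M', h1, h2⟩ := NM_rep hc hspec hlf hlg hM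
          exact ⟨M', h1, by linarith⟩


-- script utilities
lemma script_trans {c : Option X → Option X → ℝ} {f g h : List (PTree X)} {r s : ℝ}
    (h1 : Script c f g r) (h2 : Script c g h s) : Script c f h (r + s) := by
  induction h1 with
  | nil f => simpa using h2
  | @cons f₁ g₁ h₁ r₁ s₁ step scr ih =>
      rw [add_assoc]
      exact Script.cons step (ih h2)

lemma editStep_child {c : Option X → Option X → ℝ} {cs ds : List (PTree X)} {r : ℝ}
    (z : X) (rest : List (PTree X)) (h : EditStep c cs ds r) :
    EditStep c (PTree.node z cs :: rest) (PTree.node z ds :: rest) r := by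
  cases h with
  | del hd => exact EditStep.del (Deletes.child z rest hd)
  | ins hd => exact EditStep.ins (Deletes.child z rest hd)
  | rep hr => exact EditStep.rep (Replaces.child z rest hr)

lemma script_child {c : Option X → Option X → ℝ} {cs ds : List (PTree X)} {r : ℝ}
    (z : X) (rest : List (PTree X)) (h : Script c cs ds r) :
    Script c (PTree.node z cs :: rest) (PTree.node z ds :: rest) r := by
  induction h with
  | nil f => exact Script.nil _
  | cons step scr ih => exact Script.cons (editStep_child z rest step) ih

lemma editStep_skip {c : Option X → Option X → ℝ} {rest rest' : List (PTree X)} {r : ℝ}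
    (t : PTree X) (h : EditStep c rest rest' r) :
    EditStep c (t :: rest) (t :: rest') r := by
  cases h with
  | del hd => exact EditStep.del (Deletes.skip t hd)
  | ins hd => exact EditStep.ins (Deletes.skip t hd)
  | rep hr => exact EditStep.rep (Replaces.skip t hr)

lemma script_skip {c : Option X → Option X → ℝ} {rest rest' : List (PTree X)} {r : ℝ}
    (t : PTree X) (h : Script c rest rest' r) :
    Script c (t :: rest) (t :: rest') r := by
  induction h with
  | nil f => exact Script.nil _
  | cons step scr ih => exact Script.cons (editStep_skip t step) ih

lemma script_del_all {c : Option X → Option X → ℝ} :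
    ∀ f : List (PTree X), Script c f [] (∑ i ∈ Finset.range (sz f), c (lab f i) none)
  | [] => by
      simpa using Script.nil ([] : List (PTree X))
  | (PTree.node a cs) :: rest => by
      have ih := script_del_all (c := c) (cs ++ rest)
      have e : (∑ i ∈ Finset.range (sz (PTree.node a cs :: rest)),
            c (lab (PTree.node a cs :: rest) i) none)
          = c (some a) none + ∑ i ∈ Finset.range (sz (cs ++ rest)), c (lab (cs ++ rest) i) none := by
        rw [sz_cons, Finset.sum_range_succ']
        rw [lab_zero]
        rw [add_comm]
        congr 1
        refine Finset.sum_congr rfl fun i _ => ?_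
        rw [← lab_shift]
      rw [e]
      exact Script.cons (EditStep.del (Deletes.here a cs rest)) ih
termination_by f => sz f
decreasing_by rw [sz_cons]; omega

lemma script_ins_all {c : Option X → Option X → ℝ} :
    ∀ g : List (PTree X), Script c [] g (∑ j ∈ Finset.range (sz g), c none (lab g j))
  | [] => by
      simpa using Script.nil ([] : List (PTree X))
  | (PTree.node b ds) :: rest => by
      have ih := script_ins_all (c := c) (ds ++ rest)
      have step : Script c (ds ++ rest) (PTree.node b ds :: rest) (c none (some b) + 0) :=
        Script.cons (EditStep.ins (Deletes.here b ds rest)) (Script.nil _)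
      have e : (∑ j ∈ Finset.range (sz (PTree.node b ds :: rest)),
            c none (lab (PTree.node b ds :: rest) j))
          = (∑ j ∈ Finset.range (sz (ds ++ rest)), c none (lab (ds ++ rest) j))
            + (c none (some b) + 0) := by
        rw [sz_cons, Finset.sum_range_succ']
        rw [lab_zero, add_zero]
        congr 1
        refine Finset.sum_congr rfl fun j _ => ?_
        rw [← lab_shift]
      rw [e]
      exact script_trans ih step
termination_by g => sz g
decreasing_by rw [sz_cons]; omega

-- block helper lemmas for `node a cs :: f'`
lemma anc_head (a : X) (cs f' : List (PTree X)) (j : ℕ) :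
    anc (PTree.node a cs :: f') 0 j ↔ 1 ≤ j ∧ j ≤ sz cs := by
  have h1 : (0:ℕ) < sz [PTree.node a cs] := by rw [sz_single, size_node]; omega
  rw [show PTree.node a cs :: f' = [PTree.node a cs] ++ f' from rfl,
    anc_append_left h1, anc_single_zero]
  omega

lemma anc_in_head (a : X) (cs f' : List (PTree X)) {i : ℕ} (j : ℕ)
    (hi1 : 1 ≤ i) (hi2 : i ≤ sz cs) :
    anc (PTree.node a cs :: f') i j ↔ anc cs (i - 1) (j - 1) := by
  have h1 : i < sz [PTree.node a cs] := by rw [sz_single, size_node]; omega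
  rw [show PTree.node a cs :: f' = [PTree.node a cs] ++ f' from rfl,
    anc_append_left h1, anc_single_succ a cs j hi1]

lemma anc_in_tail (a : X) (cs f' : List (PTree X)) {i j : ℕ}
    (hi : sz cs + 1 ≤ i) (hj : sz cs + 1 ≤ j) :
    anc (PTree.node a cs :: f') i j ↔ anc f' (i - sz cs - 1) (j - sz cs - 1) := by
  have h1 : sz [PTree.node a cs] ≤ i := by rw [sz_single, size_node]; omega
  have h2 : sz [PTree.node a cs] ≤ j := by rw [sz_single, size_node]; omega
  rw [show PTree.node a cs :: f' = [PTree.node a cs] ++ f' from rfl,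
    anc_append_right h1 h2, sz_single, size_node]
  have e1 : i - (sz cs + 1) = i - sz cs - 1 := by omega
  have e2 : j - (sz cs + 1) = j - sz cs - 1 := by omega
  rw [e1, e2]

lemma lab_in_head (a : X) (cs f' : List (PTree X)) {i : ℕ}
    (hi1 : 1 ≤ i) (hi2 : i ≤ sz cs) :
    lab (PTree.node a cs :: f') i = lab cs (i - 1) := by
  rcases Nat.exists_eq_add_of_le hi1 with ⟨k, rfl⟩
  rw [Nat.add_comm 1 k, ← lab_shift, lab_append_left (by omega : k < sz cs)]
  simp

lemma lab_in_tail (a : X) (cs f' : List (PTree X)) {i : ℕ}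
    (hi : sz cs + 1 ≤ i) :
    lab (PTree.node a cs :: f') i = lab f' (i - sz cs - 1) := by
  rcases Nat.exists_eq_add_of_le hi with ⟨k, rfl⟩
  have e : sz cs + 1 + k = (sz cs + k) + 1 := by omega
  rw [e, ← lab_shift, lab_append_right (by omega : sz cs ≤ sz cs + k)]
  congr 1
  omega

lemma sum_range_split (m n : ℕ) (F : ℕ → ℝ) :
    ∑ i ∈ Finset.range (m + n), F i
      = (∑ i ∈ Finset.range m, F i) + ∑ i ∈ Finset.range n, F (m + i) := by
  induction n with
  | zero => simp
  | succ n ih =>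
      rw [Nat.add_succ, Finset.sum_range_succ, Finset.sum_range_succ, ih]
      ring


lemma NM_root_unmatched_left {c : Option X → Option X → ℝ} {a : X}
    {cs f' g : List (PTree X)} {M : Finset (ℕ × ℕ)}
    (hM : NM (PTree.node a cs :: f') g M) (h0 : ∀ p ∈ M, p.1 ≠ 0) :
    ∃ M', NM (cs ++ f') g M' ∧
      ncost c (PTree.node a cs :: f') g M
        = c (some a) none + ncost c (cs ++ f') g M' := by
  classical
  set f := PTree.node a cs :: f' with hf
  have hpos : ∀ p ∈ M, 1 ≤ p.1 := by
    intro p hp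
    have := h0 p hp; omega
  set φ : ℕ × ℕ → ℕ × ℕ := fun p => (p.1 - 1, p.2) with hφ
  have hinj : ∀ p ∈ M, ∀ q ∈ M, φ p = φ q → p = q := by
    intro p hp q hq hpq
    simp only [hφ, Prod.mk.injEq] at hpq
    exact NM_snd_inj hM hp hq hpq.2
  have hszf : sz f = sz (cs ++ f') + 1 := by rw [hf, sz_cons]
  refine ⟨M.image φ, ⟨?_, ?_⟩, ?_⟩
  · intro p' hp'
    obtain ⟨p, hp, rfl⟩ := Finset.mem_image.mp hp'
    have hb1 := (hM.1 p hp).1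
    have hb2 := (hM.1 p hp).2
    refine ⟨?_, hb2⟩
    have hp1 := hpos p hp
    rw [hszf] at hb1
    show p.1 - 1 < sz (cs ++ f')
    omega
  · intro p' hp' q' hq'
    obtain ⟨p, hp, rfl⟩ := Finset.mem_image.mp hp'
    obtain ⟨q, hq, rfl⟩ := Finset.mem_image.mp hq'
    have conds := hM.2 p hp q hq
    have hp1 := hpos p hp
    have hq1 := hpos q hq
    simp only [hφ]
    refine ⟨?_, ?_, ?_⟩
    · constructor
      · intro he; exact conds.1.mp (by omega)
      · intro he; have := conds.1.mpr he; omega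
    · constructor
      · intro hlt; exact conds.2.1.mp (by omega)
      · intro hlt; have := conds.2.1.mpr hlt; omega
    · have hshift := anc_shift a cs f' (p.1 - 1) (q.1 - 1)
      rw [show p.1 - 1 + 1 = p.1 by omega, show q.1 - 1 + 1 = q.1 by omega] at hshift
      exact hshift.trans conds.2.2
  · have hmatch : ∑ p' ∈ M.image φ, c (lab (cs ++ f') p'.1) (lab g p'.2)
        = ∑ p ∈ M, c (lab f p.1) (lab g p.2) := by
      rw [Finset.sum_image hinj]
      refine Finset.sum_congr rfl fun p hp => ?_
      have hp1 := hpos p hp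
      rw [lab_shift a cs f' (p.1 - 1), show p.1 - 1 + 1 = p.1 by omega]
    have hfsum : (∑ i ∈ Finset.range (sz f),
          if ∀ p ∈ M, p.1 ≠ i then c (lab f i) none else 0)
        = c (some a) none + ∑ i ∈ Finset.range (sz (cs ++ f')),
            (if ∀ p' ∈ M.image φ, p'.1 ≠ i then c (lab (cs ++ f') i) none else 0) := by
      rw [hszf, Finset.sum_range_succ']
      rw [if_pos h0, hf, lab_zero, add_comm]
      congr 1
      refine Finset.sum_congr rfl fun i _ => ?_
      refine if_congr ?_ (by rw [← hf, ← lab_shift]) rfl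
      constructor
      · intro hh p' hp' he
        obtain ⟨p, hp, rfl⟩ := Finset.mem_image.mp hp'
        have hp1 := hpos p hp
        exact hh p hp (by simp only [hφ] at he; omega)
      · intro hh p hp he
        have hp1 := hpos p hp
        exact hh (φ p) (Finset.mem_image_of_mem φ hp) (by simp only [hφ]; omega)
    have hgsum : (∑ j ∈ Finset.range (sz g),
          if ∀ p ∈ M, p.2 ≠ j then c none (lab g j) else 0)
        = ∑ j ∈ Finset.range (sz g),
            (if ∀ p' ∈ M.image φ, p'.2 ≠ j then c none (lab g j) else 0) := by
      refine Finset.sum_congr rfl fun j _ => ?_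
      refine if_congr ?_ rfl rfl
      constructor
      · intro hh p' hp'
        obtain ⟨p, hp, rfl⟩ := Finset.mem_image.mp hp'
        exact hh p hp
      · intro hh p hp
        exact hh (φ p) (Finset.mem_image_of_mem φ hp)
    unfold ncost
    rw [hmatch, hfsum, hgsum]
    ring

lemma NM_root_unmatched_right {c : Option X → Option X → ℝ} {b : X}
    {ds g' f : List (PTree X)} {M : Finset (ℕ × ℕ)}
    (hM : NM f (PTree.node b ds :: g') M) (h0 : ∀ p ∈ M, p.2 ≠ 0) :
    ∃ M', NM f (ds ++ g') M' ∧
      ncost c f (PTree.node b ds :: g') M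
        = c none (some b) + ncost c f (ds ++ g') M' := by
  classical
  set g := PTree.node b ds :: g' with hg
  have hpos : ∀ p ∈ M, 1 ≤ p.2 := by
    intro p hp
    have := h0 p hp; omega
  set φ : ℕ × ℕ → ℕ × ℕ := fun p => (p.1, p.2 - 1) with hφ
  have hinj : ∀ p ∈ M, ∀ q ∈ M, φ p = φ q → p = q := by
    intro p hp q hq hpq
    simp only [hφ, Prod.mk.injEq] at hpq
    exact NM_fst_inj hM hp hq hpq.1
  have hszg : sz g = sz (ds ++ g') + 1 := by rw [hg, sz_cons]
  refine ⟨M.image φ, ⟨?_, ?_⟩, ?_⟩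
  · intro p' hp'
    obtain ⟨p, hp, rfl⟩ := Finset.mem_image.mp hp'
    have hb1 := (hM.1 p hp).1
    have hb2 := (hM.1 p hp).2
    refine ⟨hb1, ?_⟩
    have hp1 := hpos p hp
    rw [hszg] at hb2
    show p.2 - 1 < sz (ds ++ g')
    omega
  · intro p' hp' q' hq'
    obtain ⟨p, hp, rfl⟩ := Finset.mem_image.mp hp'
    obtain ⟨q, hq, rfl⟩ := Finset.mem_image.mp hq'
    have conds := hM.2 p hp q hq
    have hp1 := hpos p hp
    have hq1 := hpos q hq
    simp only [hφ]
    refine ⟨?_, ?_, ?_⟩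
    · constructor
      · intro he; have := conds.1.mp he; omega
      · intro he; exact conds.1.mpr (by omega)
    · constructor
      · intro hlt; have := conds.2.1.mp hlt; omega
      · intro hlt; exact conds.2.1.mpr (by omega)
    · have hshift := anc_shift b ds g' (p.2 - 1) (q.2 - 1)
      rw [show p.2 - 1 + 1 = p.2 by omega, show q.2 - 1 + 1 = q.2 by omega] at hshift
      exact conds.2.2.trans hshift.symm
  · have hmatch : ∑ p' ∈ M.image φ, c (lab f p'.1) (lab (ds ++ g') p'.2)
        = ∑ p ∈ M, c (lab f p.1) (lab g p.2) := by
      rw [Finset.sum_image hinj]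
      refine Finset.sum_congr rfl fun p hp => ?_
      have hp1 := hpos p hp
      rw [lab_shift b ds g' (p.2 - 1), show p.2 - 1 + 1 = p.2 by omega]
    have hgsum : (∑ j ∈ Finset.range (sz g),
          if ∀ p ∈ M, p.2 ≠ j then c none (lab g j) else 0)
        = c none (some b) + ∑ j ∈ Finset.range (sz (ds ++ g')),
            (if ∀ p' ∈ M.image φ, p'.2 ≠ j then c none (lab (ds ++ g') j) else 0) := by
      rw [hszg, Finset.sum_range_succ']
      rw [if_pos h0, hg, lab_zero, add_comm]
      congr 1
      refine Finset.sum_congr rfl fun j _ => ?_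
      refine if_congr ?_ (by rw [← hg, ← lab_shift]) rfl
      constructor
      · intro hh p' hp' he
        obtain ⟨p, hp, rfl⟩ := Finset.mem_image.mp hp'
        have hp1 := hpos p hp
        exact hh p hp (by simp only [hφ] at he; omega)
      · intro hh p hp he
        have hp1 := hpos p hp
        exact hh (φ p) (Finset.mem_image_of_mem φ hp) (by simp only [hφ]; omega)
    have hfsum : (∑ i ∈ Finset.range (sz f),
          if ∀ p ∈ M, p.1 ≠ i then c (lab f i) none else 0)
        = ∑ i ∈ Finset.range (sz f),
            (if ∀ p' ∈ M.image φ, p'.1 ≠ i then c (lab f i) none else 0) := by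
      refine Finset.sum_congr rfl fun i _ => ?_
      refine if_congr ?_ rfl rfl
      constructor
      · intro hh p' hp'
        obtain ⟨p, hp, rfl⟩ := Finset.mem_image.mp hp'
        exact hh p hp
      · intro hh p hp
        exact hh (φ p) (Finset.mem_image_of_mem φ hp)
    unfold ncost
    rw [hmatch, hgsum, hfsum]
    ring


lemma NM_root_matched {c : Option X → Option X → ℝ} {a b : X}
    {cs f' ds g' : List (PTree X)} {M : Finset (ℕ × ℕ)}
    (hM : NM (PTree.node a cs :: f') (PTree.node b ds :: g') M)
    (h00 : (0, 0) ∈ M) :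
    ∃ M₁ M₂, NM cs ds M₁ ∧ NM f' g' M₂ ∧
      ncost c (PTree.node a cs :: f') (PTree.node b ds :: g') M
        = c (some a) (some b) + ncost c cs ds M₁ + ncost c f' g' M₂ := by
  classical
  have hszf : sz (PTree.node a cs :: f') = sz cs + sz f' + 1 := by
    rw [sz_cons, sz_append]
  have hszg : sz (PTree.node b ds :: g') = sz ds + sz g' + 1 := by
    rw [sz_cons, sz_append]
  have hz1 : ∀ p ∈ M, p.1 = 0 → p = (0, 0) := by
    intro p hp h1
    exact Prod.ext h1 ((hM.2 p hp (0,0) h00).1.mp h1)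
  have hz2 : ∀ p ∈ M, p.2 = 0 → p = (0, 0) := by
    intro p hp h2
    exact Prod.ext ((hM.2 p hp (0,0) h00).1.mpr h2) h2
  have hblock : ∀ p ∈ M, p ≠ (0, 0) →
      ((1 ≤ p.1 ∧ p.1 ≤ sz cs) ↔ (1 ≤ p.2 ∧ p.2 ≤ sz ds)) := by
    intro p hp hne
    have hanc := (hM.2 (0,0) h00 p hp).2.2
    rw [anc_head, anc_head] at hanc
    exact hanc
  set F₁ : Finset (ℕ × ℕ) := M.filter (fun p => 1 ≤ p.1 ∧ p.1 ≤ sz cs) with hF₁def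
  set F₂ : Finset (ℕ × ℕ) := M.filter (fun p => sz cs + 1 ≤ p.1) with hF₂def
  set ψ₁ : ℕ × ℕ → ℕ × ℕ := fun p => (p.1 - 1, p.2 - 1) with hψ₁
  set ψ₂ : ℕ × ℕ → ℕ × ℕ := fun p => (p.1 - sz cs - 1, p.2 - sz ds - 1) with hψ₂
  have hF₁ : ∀ p ∈ F₁, p ∈ M ∧ 1 ≤ p.1 ∧ p.1 ≤ sz cs ∧ 1 ≤ p.2 ∧ p.2 ≤ sz ds := by
    intro p hp
    obtain ⟨hpM, hp1⟩ := Finset.mem_filter.mp hp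
    have hne : p ≠ (0,0) := by
      intro he; rw [he] at hp1; omega
    have := (hblock p hpM hne).mp hp1
    exact ⟨hpM, hp1.1, hp1.2, this.1, this.2⟩
  have hF₂ : ∀ p ∈ F₂, p ∈ M ∧ sz cs + 1 ≤ p.1 ∧ sz ds + 1 ≤ p.2
      ∧ p.1 < sz cs + sz f' + 1 ∧ p.2 < sz ds + sz g' + 1 := by
    intro p hp
    obtain ⟨hpM, hp1⟩ := Finset.mem_filter.mp hp
    have hne : p ≠ (0,0) := by
      intro he; rw [he] at hp1; omega
    have h2ne : p.2 ≠ 0 := by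
      intro he; exact hne (hz2 p hpM he)
    have hnb : ¬ (1 ≤ p.2 ∧ p.2 ≤ sz ds) := by
      intro hcon
      have := (hblock p hpM hne).mpr hcon
      omega
    have hb := hM.1 p hpM
    rw [hszf] at hb
    have hb2 := hb.2
    rw [hszg] at hb2
    exact ⟨hpM, hp1, by omega, hb.1, hb2⟩
  have hinj₁ : ∀ p ∈ F₁, ∀ q ∈ F₁, ψ₁ p = ψ₁ q → p = q := by
    intro p hp q hq hpq
    simp only [hψ₁, Prod.mk.injEq] at hpq
    obtain ⟨-, -, -, hp2, -⟩ := hF₁ p hp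
    obtain ⟨-, -, -, hq2, -⟩ := hF₁ q hq
    exact NM_snd_inj hM (hF₁ p hp).1 (hF₁ q hq).1 (by omega)
  have hinj₂ : ∀ p ∈ F₂, ∀ q ∈ F₂, ψ₂ p = ψ₂ q → p = q := by
    intro p hp q hq hpq
    simp only [hψ₂, Prod.mk.injEq] at hpq
    obtain ⟨-, -, hp2, -, -⟩ := hF₂ p hp
    obtain ⟨-, -, hq2, -, -⟩ := hF₂ q hq
    exact NM_snd_inj hM (hF₂ p hp).1 (hF₂ q hq).1 (by omega)
  refine ⟨F₁.image ψ₁, F₂.image ψ₂, ⟨?_, ?_⟩, ⟨?_, ?_⟩, ?_⟩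
  · -- bounds for M₁
    intro p' hp'
    obtain ⟨p, hp, rfl⟩ := Finset.mem_image.mp hp'
    obtain ⟨-, h1, h2, h3, h4⟩ := hF₁ p hp
    constructor
    · show p.1 - 1 < sz cs; omega
    · show p.2 - 1 < sz ds; omega
  · -- conditions for M₁
    intro p' hp' q' hq'
    obtain ⟨p, hp, rfl⟩ := Finset.mem_image.mp hp'
    obtain ⟨q, hq, rfl⟩ := Finset.mem_image.mp hq'
    obtain ⟨hpM, hp1, hp2, hp3, hp4⟩ := hF₁ p hp
    obtain ⟨hqM, hq1, hq2, hq3, hq4⟩ := hF₁ q hq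
    have conds := hM.2 p hpM q hqM
    simp only [hψ₁]
    refine ⟨?_, ?_, ?_⟩
    · constructor
      · intro he; have := conds.1.mp (by omega); omega
      · intro he; have := conds.1.mpr (by omega); omega
    · constructor
      · intro hlt; have := conds.2.1.mp (by omega); omega
      · intro hlt; have := conds.2.1.mpr (by omega); omega
    · exact ((anc_in_head a cs f' q.1 hp1 hp2).symm.trans conds.2.2).trans
        (anc_in_head b ds g' q.2 hp3 hp4)
  · -- bounds for M₂
    intro p' hp'
    obtain ⟨p, hp, rfl⟩ := Finset.mem_image.mp hp'
    obtain ⟨-, h1, h2, h3, h4⟩ := hF₂ p hp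
    constructor
    · show p.1 - sz cs - 1 < sz f'; omega
    · show p.2 - sz ds - 1 < sz g'; omega
  · -- conditions for M₂
    intro p' hp' q' hq'
    obtain ⟨p, hp, rfl⟩ := Finset.mem_image.mp hp'
    obtain ⟨q, hq, rfl⟩ := Finset.mem_image.mp hq'
    obtain ⟨hpM, hp1, hp2, hp3, hp4⟩ := hF₂ p hp
    obtain ⟨hqM, hq1, hq2, hq3, hq4⟩ := hF₂ q hq
    have conds := hM.2 p hpM q hqM
    simp only [hψ₂]
    refine ⟨?_, ?_, ?_⟩
    · constructor
      · intro he; have := conds.1.mp (by omega); omega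
      · intro he; have := conds.1.mpr (by omega); omega
    · constructor
      · intro hlt; have := conds.2.1.mp (by omega); omega
      · intro hlt; have := conds.2.1.mpr (by omega); omega
    · exact ((anc_in_tail a cs f' hp1 hq1).symm.trans conds.2.2).trans
        (anc_in_tail b ds g' hp2 hq2)
  · -- cost identity
    have hlab₁ : ∀ p ∈ F₁,
        c (lab cs (p.1 - 1)) (lab ds (p.2 - 1))
          = c (lab (PTree.node a cs :: f') p.1) (lab (PTree.node b ds :: g') p.2) := by
      intro p hp
      obtain ⟨-, h1, h2, h3, h4⟩ := hF₁ p hp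
      rw [lab_in_head a cs f' h1 h2, lab_in_head b ds g' h3 h4]
    have hlab₂ : ∀ p ∈ F₂,
        c (lab f' (p.1 - sz cs - 1)) (lab g' (p.2 - sz ds - 1))
          = c (lab (PTree.node a cs :: f') p.1) (lab (PTree.node b ds :: g') p.2) := by
      intro p hp
      obtain ⟨-, h1, h2, -, -⟩ := hF₂ p hp
      rw [lab_in_tail a cs f' h1, lab_in_tail b ds g' h2]
    have hmatch : ∑ p ∈ M,
          c (lab (PTree.node a cs :: f') p.1) (lab (PTree.node b ds :: g') p.2)
        = c (some a) (some b)
          + (∑ p' ∈ F₁.image ψ₁, c (lab cs p'.1) (lab ds p'.2))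
          + (∑ p' ∈ F₂.image ψ₂, c (lab f' p'.1) (lab g' p'.2)) := by
      rw [← Finset.add_sum_erase M _ h00]
      have he₁ : (M.erase (0,0)).filter (fun p => p.1 ≤ sz cs) = F₁ := by
        ext p
        simp only [Finset.mem_filter, Finset.mem_erase, hF₁def]
        constructor
        · rintro ⟨⟨hne, hp⟩, hle⟩
          refine ⟨hp, ?_, hle⟩
          rcases Nat.eq_zero_or_pos p.1 with h0 | h0
          · exact absurd (hz1 p hp h0) hne
          · omega
        · rintro ⟨hp, h1, h2⟩
          exact ⟨⟨fun he => by rw [he] at h1; simp at h1, hp⟩, h2⟩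
      have he₂ : (M.erase (0,0)).filter (fun p => ¬ p.1 ≤ sz cs) = F₂ := by
        ext p
        simp only [Finset.mem_filter, Finset.mem_erase, hF₂def]
        constructor
        · rintro ⟨⟨hne, hp⟩, hle⟩
          exact ⟨hp, by omega⟩
        · rintro ⟨hp, h1⟩
          exact ⟨⟨fun he => by rw [he] at h1; simp at h1, hp⟩, by omega⟩
      rw [← Finset.sum_filter_add_sum_filter_not (M.erase (0,0)) (fun p => p.1 ≤ sz cs),
        he₁, he₂]
      rw [Finset.sum_image hinj₁, Finset.sum_image hinj₂]
      rw [lab_zero, lab_zero]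
      have s₁ : ∑ p ∈ F₁, c (lab cs ((ψ₁ p).1)) (lab ds ((ψ₁ p).2))
          = ∑ p ∈ F₁, c (lab (PTree.node a cs :: f') p.1) (lab (PTree.node b ds :: g') p.2) :=
        Finset.sum_congr rfl fun p hp => hlab₁ p hp
      have s₂ : ∑ p ∈ F₂, c (lab f' ((ψ₂ p).1)) (lab g' ((ψ₂ p).2))
          = ∑ p ∈ F₂, c (lab (PTree.node a cs :: f') p.1) (lab (PTree.node b ds :: g') p.2) :=
        Finset.sum_congr rfl fun p hp => hlab₂ p hp
      rw [s₁, s₂]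
      ring
    have hfsum : (∑ i ∈ Finset.range (sz (PTree.node a cs :: f')),
          if ∀ p ∈ M, p.1 ≠ i then c (lab (PTree.node a cs :: f') i) none else 0)
        = (∑ i ∈ Finset.range (sz cs),
            if ∀ p' ∈ F₁.image ψ₁, p'.1 ≠ i then c (lab cs i) none else 0)
          + (∑ i ∈ Finset.range (sz f'),
            if ∀ p' ∈ F₂.image ψ₂, p'.1 ≠ i then c (lab f' i) none else 0) := by
      rw [hszf, Finset.sum_range_succ']
      have h0 : ¬ (∀ p ∈ M, p.1 ≠ 0) := fun hh => hh (0,0) h00 rfl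
      rw [if_neg h0, add_zero, sum_range_split]
      congr 1
      · refine Finset.sum_congr rfl fun i hi => ?_
        have hi' := Finset.mem_range.mp hi
        refine if_congr ?_ ?_ rfl
        · constructor
          · intro hh p' hp' he
            obtain ⟨p, hp, rfl⟩ := Finset.mem_image.mp hp'
            obtain ⟨hpM, h1, h2, -, -⟩ := hF₁ p hp
            refine hh p hpM ?_
            simp only [hψ₁] at he
            omega
          · intro hh p hp he
            have hpF : p ∈ F₁ := Finset.mem_filter.mpr ⟨hp, by omega⟩
            refine hh (ψ₁ p) (Finset.mem_image_of_mem ψ₁ hpF) ?_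
            simp only [hψ₁]
            omega
        · rw [lab_in_head a cs f' (by omega : 1 ≤ i + 1) (by omega : i + 1 ≤ sz cs)]
          simp
      · refine Finset.sum_congr rfl fun i hi => ?_
        have hi' := Finset.mem_range.mp hi
        refine if_congr ?_ ?_ rfl
        · constructor
          · intro hh p' hp' he
            obtain ⟨p, hp, rfl⟩ := Finset.mem_image.mp hp'
            obtain ⟨hpM, h1, h2, -, -⟩ := hF₂ p hp
            refine hh p hpM ?_
            simp only [hψ₂] at he
            omega
          · intro hh p hp he
            have hpF : p ∈ F₂ := Finset.mem_filter.mpr ⟨hp, by omega⟩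
            refine hh (ψ₂ p) (Finset.mem_image_of_mem ψ₂ hpF) ?_
            simp only [hψ₂]
            omega
        · rw [lab_in_tail a cs f' (by omega : sz cs + 1 ≤ sz cs + i + 1),
            show sz cs + i + 1 - sz cs - 1 = i from by omega]
    have hgsum : (∑ j ∈ Finset.range (sz (PTree.node b ds :: g')),
          if ∀ p ∈ M, p.2 ≠ j then c none (lab (PTree.node b ds :: g') j) else 0)
        = (∑ j ∈ Finset.range (sz ds),
            if ∀ p' ∈ F₁.image ψ₁, p'.2 ≠ j then c none (lab ds j) else 0)
          + (∑ j ∈ Finset.range (sz g'),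
            if ∀ p' ∈ F₂.image ψ₂, p'.2 ≠ j then c none (lab g' j) else 0) := by
      rw [hszg, Finset.sum_range_succ']
      have h0 : ¬ (∀ p ∈ M, p.2 ≠ 0) := fun hh => hh (0,0) h00 rfl
      rw [if_neg h0, add_zero, sum_range_split]
      congr 1
      · refine Finset.sum_congr rfl fun j hj => ?_
        have hj' := Finset.mem_range.mp hj
        refine if_congr ?_ ?_ rfl
        · constructor
          · intro hh p' hp' he
            obtain ⟨p, hp, rfl⟩ := Finset.mem_image.mp hp'
            obtain ⟨hpM, -, -, h3, h4⟩ := hF₁ p hp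
            refine hh p hpM ?_
            simp only [hψ₁] at he
            omega
          · intro hh p hp he
            have hne : p ≠ (0,0) := by
              intro hcon; rw [hcon] at he; simp at he
            have h1 : 1 ≤ p.1 ∧ p.1 ≤ sz cs :=
              (hblock p hp hne).mpr (by omega)
            have hpF : p ∈ F₁ := Finset.mem_filter.mpr ⟨hp, h1⟩
            refine hh (ψ₁ p) (Finset.mem_image_of_mem ψ₁ hpF) ?_
            simp only [hψ₁]
            omega
        · rw [lab_in_head b ds g' (by omega : 1 ≤ j + 1) (by omega : j + 1 ≤ sz ds)]
          simp
      · refine Finset.sum_congr rfl fun j hj => ?_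
        have hj' := Finset.mem_range.mp hj
        refine if_congr ?_ ?_ rfl
        · constructor
          · intro hh p' hp' he
            obtain ⟨p, hp, rfl⟩ := Finset.mem_image.mp hp'
            obtain ⟨hpM, -, h2, -, -⟩ := hF₂ p hp
            refine hh p hpM ?_
            simp only [hψ₂] at he
            omega
          · intro hh p hp he
            have hne : p ≠ (0,0) := by
              intro hcon; rw [hcon] at he; simp at he
            have hnb : ¬ (1 ≤ p.1 ∧ p.1 ≤ sz cs) := by
              intro hcon
              have := (hblock p hp hne).mp hcon
              omega
            have h1ne : p.1 ≠ 0 := by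
              intro hcon; exact hne (hz1 p hp hcon)
            have hpF : p ∈ F₂ := Finset.mem_filter.mpr ⟨hp, by omega⟩
            refine hh (ψ₂ p) (Finset.mem_image_of_mem ψ₂ hpF) ?_
            simp only [hψ₂]
            omega
        · rw [lab_in_tail b ds g' (by omega : sz ds + 1 ≤ sz ds + j + 1),
            show sz ds + j + 1 - sz ds - 1 = j from by omega]
    unfold ncost
    rw [hmatch, hfsum, hgsum]
    ring


lemma sz_cons_pos (t : PTree X) (ts : List (PTree X)) : 0 < sz (t :: ts) := by
  cases t with
  | node a cs => rw [sz_cons]; omega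

lemma NM_nil_left {c : Option X → Option X → ℝ} {g : List (PTree X)} {M : Finset (ℕ × ℕ)}
    (hM : NM [] g M) :
    ∃ r, Script c [] g r ∧ r ≤ ncost c [] g M := by
  have hM0 : M = ∅ := by
    refine Finset.eq_empty_of_forall_notMem fun p hp => ?_
    have := (hM.1 p hp).1
    rw [sz_nil] at this
    omega
  refine ⟨_, script_ins_all g, le_of_eq ?_⟩
  subst hM0
  unfold ncost
  simp

lemma NM_nil_right {c : Option X → Option X → ℝ} {f : List (PTree X)} {M : Finset (ℕ × ℕ)}
    (hM : NM f [] M) :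
    ∃ r, Script c f [] r ∧ r ≤ ncost c f [] M := by
  have hM0 : M = ∅ := by
    refine Finset.eq_empty_of_forall_notMem fun p hp => ?_
    have := (hM.1 p hp).2
    rw [sz_nil] at this
    omega
  refine ⟨_, script_del_all f, le_of_eq ?_⟩
  subst hM0
  unfold ncost
  simp

/-- Direction A: every tree mapping gives a script of no greater cost. -/
lemma NM_to_script {c : Option X → Option X → ℝ} (hc : PM c) :
    ∀ (n : ℕ) (f g : List (PTree X)) (M : Finset (ℕ × ℕ)), sz f + sz g ≤ n →
      NM f g M → ∃ r, Script c f g r ∧ r ≤ ncost c f g M := by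
  intro n
  induction n using Nat.strong_induction_on with
  | _ n ih =>
    intro f g M hsz hM
    cases f with
    | nil => exact NM_nil_left hM
    | cons t f' =>
      cases g with
      | nil => exact NM_nil_right hM
      | cons u g' =>
        obtain ⟨a, cs⟩ := t
        obtain ⟨b, ds⟩ := u
        have hszf : sz (PTree.node a cs :: f') = sz cs + sz f' + 1 := by
          rw [sz_cons, sz_append]
        have hszg : sz (PTree.node b ds :: g') = sz ds + sz g' + 1 := by
          rw [sz_cons, sz_append]
        by_cases h0f : ∀ p ∈ M, p.1 ≠ 0
        · obtain ⟨M', hM', hcosteq⟩ := NM_root_unmatched_left (c := c) hM h0f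
          have hlt : sz (cs ++ f') + sz (PTree.node b ds :: g') < n := by
            rw [sz_append]; omega
          obtain ⟨r, hscr, hle⟩ := ih _ hlt (cs ++ f') (PTree.node b ds :: g') M' le_rfl hM'
          refine ⟨c (some a) none + r,
            Script.cons (EditStep.del (Deletes.here a cs f')) hscr, ?_⟩
          rw [hcosteq]
          linarith
        · by_cases h0g : ∀ p ∈ M, p.2 ≠ 0
          · obtain ⟨M', hM', hcosteq⟩ := NM_root_unmatched_right (c := c) hM h0g
            have hlt : sz (PTree.node a cs :: f') + sz (ds ++ g') < n := by
              rw [sz_append]; omega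
            obtain ⟨r, hscr, hle⟩ := ih _ hlt (PTree.node a cs :: f') (ds ++ g') M' le_rfl hM'
            refine ⟨r + (c none (some b) + 0),
              script_trans hscr
                (Script.cons (EditStep.ins (Deletes.here b ds g')) (Script.nil _)), ?_⟩
            rw [hcosteq]
            linarith
          · push_neg at h0f h0g
            obtain ⟨p₁, hp₁, hp₁0⟩ := h0f
            obtain ⟨p₂, hp₂, hp₂0⟩ := h0g
            have h00 : (0, 0) ∈ M := by
              have conds := hM.2 p₁ hp₁ p₂ hp₂
              have h1 : ¬ (p₁.1 < p₂.1) := by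
                intro hcon
                have := conds.2.1.mp hcon
                omega
              have h2 : p₁.1 = p₂.1 := by omega
              have h3 : p₁.2 = p₂.2 := conds.1.mp h2
              have he : p₁ = (0, 0) := Prod.ext hp₁0 (by omega)
              rw [← he]
              exact hp₁
            obtain ⟨M₁, M₂, hM₁, hM₂, hcosteq⟩ := NM_root_matched (c := c) hM h00
            have hlt₁ : sz cs + sz ds < n := by omega
            have hlt₂ : sz f' + sz g' < n := by omega
            obtain ⟨r₁, hscr₁, hle₁⟩ := ih _ hlt₁ cs ds M₁ le_rfl hM₁
            obtain ⟨r₂, hscr₂, hle₂⟩ := ih _ hlt₂ f' g' M₂ le_rfl hM₂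
            have s1 : Script c (PTree.node b cs :: f') (PTree.node b ds :: f') r₁ :=
              script_child b f' hscr₁
            have s2 : Script c (PTree.node b ds :: f') (PTree.node b ds :: g') r₂ :=
              script_skip (PTree.node b ds) hscr₂
            refine ⟨c (some a) (some b) + (r₁ + r₂),
              Script.cons (EditStep.rep (Replaces.here a b cs f')) (script_trans s1 s2), ?_⟩
            rw [hcosteq]
            linarith


-- bridge between tree-level (Fin) and forest-level (ℕ) notions
lemma preorderF_single (t : PTree X) : preorderF [t] = preorder t := by
  rw [preorderF_cons]; simp

lemma subtreeSizesF_single (t : PTree X) : subtreeSizesF [t] = subtreeSizes t := by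
  rw [subtreeSizesF_cons]; simp

lemma isAncestor_iff_anc (t : PTree X) (i j : ℕ) : IsAncestor t i j ↔ anc [t] i j := by
  unfold IsAncestor anc
  rw [subtreeSizesF_single]

lemma label_eq_lab (t : PTree X) (i : Fin (size t)) :
    lab [t] (i : ℕ) = some (label t i) := by
  unfold lab label
  rw [preorderF_single]
  exact List.getElem?_eq_getElem i.2

/-- Convert a `Fin`-indexed tree mapping to an `ℕ`-indexed one. -/
def toNat (x y : PTree X) (M : Finset (Fin (size x) × Fin (size y))) : Finset (ℕ × ℕ) :=
  M.image (fun p => ((p.1 : ℕ), (p.2 : ℕ)))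

lemma toNat_inj (x y : PTree X) (M : Finset (Fin (size x) × Fin (size y))) :
    ∀ p ∈ M, ∀ q ∈ M,
      ((p.1 : ℕ), (p.2 : ℕ)) = ((q.1 : ℕ), (q.2 : ℕ)) → p = q := by
  intro p _ q _ h
  simp only [Prod.mk.injEq] at h
  exact Prod.ext (Fin.ext h.1) (Fin.ext h.2)

lemma bridge_mapping {x y : PTree X} (M : Finset (Fin (size x) × Fin (size y))) :
    IsTreeMapping x y M ↔ NM [x] [y] (toNat x y M) := by
  constructor
  · intro h
    constructor
    · intro p' hp'
      obtain ⟨p, hp, rfl⟩ := Finset.mem_image.mp hp'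
      constructor
      · rw [sz_single]; exact p.1.isLt
      · rw [sz_single]; exact p.2.isLt
    · intro p' hp' q' hq'
      obtain ⟨p, hp, rfl⟩ := Finset.mem_image.mp hp'
      obtain ⟨q, hq, rfl⟩ := Finset.mem_image.mp hq'
      have conds := h p hp q hq
      refine ⟨?_, ?_, ?_⟩
      · rw [Fin.val_eq_val, Fin.val_eq_val]
        exact conds.1
      · exact conds.2.1
      · exact ((isAncestor_iff_anc x _ _).symm.trans conds.2.2).trans (isAncestor_iff_anc y _ _)
  · intro h p hp q hq
    have conds := h.2 ((p.1 : ℕ), (p.2 : ℕ)) (Finset.mem_image_of_mem _ hp)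
      ((q.1 : ℕ), (q.2 : ℕ)) (Finset.mem_image_of_mem _ hq)
    refine ⟨?_, ?_, ?_⟩
    · rw [← Fin.val_eq_val p.1 q.1, ← Fin.val_eq_val p.2 q.2]
      exact conds.1
    · exact conds.2.1
    · exact ((isAncestor_iff_anc x _ _).trans conds.2.2).trans (isAncestor_iff_anc y _ _).symm

lemma bridge_cost (c : Option X → Option X → ℝ) {x y : PTree X}
    (M : Finset (Fin (size x) × Fin (size y))) :
    mappingCost c x y M = ncost c [x] [y] (toNat x y M) := by
  classical
  unfold mappingCost ncost
  have h1 : ∑ p' ∈ toNat x y M, c (lab [x] p'.1) (lab [y] p'.2)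
      = ∑ p ∈ M, c (some (label x p.1)) (some (label y p.2)) := by
    rw [toNat, Finset.sum_image (toNat_inj x y M)]
    refine Finset.sum_congr rfl fun p _ => ?_
    rw [label_eq_lab, label_eq_lab]
  have h2 : (∑ i ∈ Finset.range (sz [x]),
        if ∀ p ∈ toNat x y M, p.1 ≠ i then c (lab [x] i) none else 0)
      = ∑ i ∈ Finset.univ.filter (fun i : Fin (size x) => ∀ p ∈ M, p.1 ≠ i),
          c (some (label x i)) none := by
    rw [Finset.sum_filter, sz_single, ← Fin.sum_univ_eq_sum_range]
    refine Finset.sum_congr rfl fun i _ => ?_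
    refine if_congr ?_ (by rw [label_eq_lab]) rfl
    constructor
    · intro hh p hp he
      exact hh ((p.1 : ℕ), (p.2 : ℕ)) (Finset.mem_image_of_mem _ hp) (by rw [he])
    · intro hh p' hp' he
      obtain ⟨p, hp, rfl⟩ := Finset.mem_image.mp hp'
      exact hh p hp (Fin.ext he)
  have h3 : (∑ j ∈ Finset.range (sz [y]),
        if ∀ p ∈ toNat x y M, p.2 ≠ j then c none (lab [y] j) else 0)
      = ∑ j ∈ Finset.univ.filter (fun j : Fin (size y) => ∀ p ∈ M, p.2 ≠ j),
          c none (some (label y j)) := by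
    rw [Finset.sum_filter, sz_single, ← Fin.sum_univ_eq_sum_range]
    refine Finset.sum_congr rfl fun j _ => ?_
    refine if_congr ?_ (by rw [label_eq_lab]) rfl
    constructor
    · intro hh p hp he
      exact hh ((p.1 : ℕ), (p.2 : ℕ)) (Finset.mem_image_of_mem _ hp) (by rw [he])
    · intro hh p' hp' he
      obtain ⟨p, hp, rfl⟩ := Finset.mem_image.mp hp'
      exact hh p hp (Fin.ext he)
  rw [h1, h2, h3]

lemma bridge_surj {x y : PTree X} {N : Finset (ℕ × ℕ)} (hN : NM [x] [y] N) :
    ∃ M : Finset (Fin (size x) × Fin (size y)), toNat x y M = N := by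
  classical
  refine ⟨N.attach.image (fun q =>
    ((⟨q.1.1, by have := (hN.1 q.1 q.2).1; rwa [sz_single] at this⟩ : Fin (size x)),
     (⟨q.1.2, by have := (hN.1 q.1 q.2).2; rwa [sz_single] at this⟩ : Fin (size y)))), ?_⟩
  ext p
  simp only [toNat, Finset.mem_image, Finset.mem_attach, true_and]
  constructor
  · rintro ⟨r, ⟨q, rfl⟩, rfl⟩
    simpa using q.2
  · intro hp
    exact ⟨_, ⟨⟨p, hp⟩, rfl⟩, rfl⟩

lemma script_nonneg {c : Option X → Option X → ℝ} (hc : PM c) {f g : List (PTree X)} {r : ℝ}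
    (h : Script c f g r) : 0 ≤ r := by
  induction h with
  | nil f => exact le_rfl
  | cons step scr ih =>
      have h0 : ∀ a b, (0:ℝ) ≤ c a b := hc.1
      cases step with
      | @del l _ => have := h0 (some l) none; linarith
      | @ins l _ => have := h0 none (some l); linarith
      | @rep l l' _ => have := h0 (some l) (some l'); linarith

end PTree


/-- A pseudo-metric on a type `S`: non-negative, symmetric, zero on the
diagonal, and satisfying the triangle inequality. -/
def IsPseudoMetric {S : Type} (c : S → S → ℝ) : Prop :=
  (∀ a b, 0 ≤ c a b) ∧ (∀ a b, c a b = c b a) ∧ (∀ a, c a a = 0) ∧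
    (∀ a b d, c a d ≤ c a b + c b d)

/-- Let `c` be a pseudo-metric on `X ∪ {−}`, where `X` is a
finite alphabet. Then for all trees `x̄`, `ȳ` over `X`, the mapping distance
`D_c(x̄, ȳ)` (the quantity computed by the dynamic programming scheme of
Zhang and Shasha) equals the tree edit distance `d_c(x̄, ȳ)`. -/
theorem mapDist_eq_editDist (X : Type) [Fintype X]
    (c : Option X → Option X → ℝ) (hc : IsPseudoMetric c) (x y : PTree X) :
    PTree.mapDist c x y = PTree.editDist c x y := by
  have hc' : PTree.PM c := hc
  unfold PTree.mapDist PTree.editDist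
  have hSe_ne : {r : ℝ | PTree.Script c [x] [y] r}.Nonempty :=
    ⟨_, PTree.script_trans (PTree.script_del_all [x]) (PTree.script_ins_all [y])⟩
  have hSm_ne : {r : ℝ | ∃ M, PTree.IsTreeMapping x y M ∧
      PTree.mappingCost c x y M = r}.Nonempty :=
    ⟨PTree.mappingCost c x y ∅, ∅, fun p hp => absurd hp (Finset.notMem_empty p), rfl⟩
  have hSe_bdd : BddBelow {r : ℝ | PTree.Script c [x] [y] r} :=
    ⟨0, fun r hr => PTree.script_nonneg hc' hr⟩
  have hSm_bdd : BddBelow {r : ℝ | ∃ M, PTree.IsTreeMapping x y M ∧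
      PTree.mappingCost c x y M = r} := by
    refine ⟨0, ?_⟩
    rintro r ⟨M, hM, rfl⟩
    rw [PTree.bridge_cost]
    exact PTree.ncost_nonneg hc' _ _ _
  apply le_antisymm
  · refine le_csInf hSe_ne fun r hr => ?_
    obtain ⟨N, hN, hNc⟩ := PTree.script_to_NM hc' hr
    obtain ⟨M, rfl⟩ := PTree.bridge_surj hN
    have h1 : PTree.IsTreeMapping x y M := (PTree.bridge_mapping M).mpr hN
    have h2 : PTree.mappingCost c x y M ≤ r := by
      rw [PTree.bridge_cost]; exact hNc
    exact (csInf_le hSm_bdd ⟨M, h1, rfl⟩).trans h2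
  · refine le_csInf hSm_ne ?_
    rintro r ⟨M, hM, rfl⟩
    have hN := (PTree.bridge_mapping M).mp hM
    obtain ⟨s, hscr, hle⟩ := PTree.NM_to_script hc'
      (PTree.sz [x] + PTree.sz [y]) [x] [y] (PTree.toNat x y M) le_rfl hN
    have h2 : s ≤ PTree.mappingCost c x y M := by
      rw [PTree.bridge_cost]; exact hle
    exact (csInf_le hSe_bdd hscr).trans h2
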